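/- arXiv:1207.2012 — 2 statements merged into one kernel-verified Lean document; each statement's English description precedes it below -/
import Mathlib

section
/- (Theorem 4.3: convergence of the two-dimensional implicit scheme, 0 < γ < 1.) Let γ ∈ (0,1), α, β ∈ (1,2], integers N_x, N_y ≥ 2 and N_t ≥ 1, reals τ, Δx, Δy > 0, nonnegative reals c_{i,j,k}, d_{i,j,k} (1 ≤ i ≤ N_x-1, 1 ≤ j ≤ N_y-1, 1 ≤ k ≤ N_t), and set ω'_{i,j,k} = -Γ(2-γ)·τ^γ·κ_α·c_{i,j,k}/(Γ(4-α)·(Δx)^α) ≥ 0, ω''_{i,j,k} = -Γ(2-γ)·τ^γ·κ_β·d_{i,j,k}/(Γ(4-β)·(Δy)^β) ≥ 0. Let R^k_{i,j} be reals with R_max = max_{i,j,k} |R^k_{i,j}|. Suppose real numbers ε^k_{i,j} satisfy ε^0_{i,j} = 0 for all i, j; ε^k_{i,j} = 0 whenever i ∈ {0, N_x} or j ∈ {0, N_y} and 1 ≤ k ≤ N_t; and for all interior (i,j) and 0 ≤ k ≤ N_t - 1: (1 - ω'_{i,j,k+1}·g^{α,N_x}_{i,i} - ω''_{i,j,k+1}·g^{β,N_y}_{j,j})·ε^{k+1}_{i,j}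 - ω'_{i,j,k+1}·Σ_{m=0, m≠i}^{N_x} g^{α,N_x}_{i,m}·ε^{k+1}_{m,j} - ω''_{i,j,k+1}·Σ_{m=0, m≠j}^{N_y} g^{β,N_y}_{j,m}·ε^{k+1}_{i,m} = Σ_{s=0}^{k-1}(l_s - l_{s+1})·ε^{k-s}_{i,j} + R^{k+1}_{i,j}. Then for every 1 ≤ k ≤ N_t: max_{i,j} |ε^k_{i,j}| ≤ R_max / l_{k-1} ≤ (k^γ/(1-γ))·R_max. In particular, if T > 0, N_t·τ ≤ T and |R^k_{i,j}| ≤ C·τ^γ·(τ^{2-γ} + (Δx)^2 + (Δy)^2) for all i, j, k, then max_{i,j} |ε^k_{i,j}| ≤ (C·T^γ/(1-γ))·(τ^{2-γ} + (Δx)^2 + (Δy)^2) for all k. -/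
/-- The coefficients `a^ν_{j,m}` of the second-order discretization of the left
Riemann–Liouville fractional derivative. All powers are real powers. -/
noncomputable def aCoef (ν : ℝ) (j m : ℕ) : ℝ :=
  if m = j then 1
  else if m = 0 then ((j : ℝ) - 1) ^ (3 - ν) - (j : ℝ) ^ (2 - ν) * ((j : ℝ) - 3 + ν)
  else ((j : ℝ) - (m : ℝ) + 1) ^ (3 - ν) - 2 * ((j : ℝ) - (m : ℝ)) ^ (3 - ν)
    + ((j : ℝ) - (m : ℝ) - 1) ^ (3 - ν)

/-- The coefficients `b^ν_{j,m}` of the second-order discretization of the right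
Riemann–Liouville fractional derivative on a grid with `N` subintervals. -/
noncomputable def bCoef (ν : ℝ) (N j m : ℕ) : ℝ :=
  if m = j then 1
  else if m = N then (3 - ν - (N : ℝ) + (j : ℝ)) * ((N : ℝ) - (j : ℝ)) ^ (2 - ν)
    + ((N : ℝ) - (j : ℝ) - 1) ^ (3 - ν)
  else ((m : ℝ) - (j : ℝ) + 1) ^ (3 - ν) - 2 * ((m : ℝ) - (j : ℝ)) ^ (3 - ν)
    + ((m : ℝ) - (j : ℝ) - 1) ^ (3 - ν)

/-- The coefficients `p^ν_{i,m}` (left-derivative part), for `1 ≤ i ≤ N-1`. -/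
noncomputable def pCoef (ν : ℝ) (i m : ℕ) : ℝ :=
  if m < i then aCoef ν (i - 1) m - 2 * aCoef ν i m + aCoef ν (i + 1) m
  else if m = i then -2 * aCoef ν i i + aCoef ν (i + 1) i
  else if m = i + 1 then aCoef ν (i + 1) (i + 1)
  else 0

/-- The coefficients `q^ν_{i,m}` (right-derivative part), for `1 ≤ i ≤ N-1`. -/
noncomputable def qCoef (ν : ℝ) (N i m : ℕ) : ℝ :=
  if m + 1 < i then 0
  else if m + 1 = i then bCoef ν N (i - 1) (i - 1)
  else if m = i then -2 * bCoef ν N i i + bCoef ν N (i - 1) i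
  else bCoef ν N (i - 1) m - 2 * bCoef ν N i m + bCoef ν N (i + 1) m

/-- The Riesz-derivative difference coefficients `g^{ν,N}_{i,m} = p^ν_{i,m} + q^ν_{i,m}`. -/
noncomputable def gCoef (ν : ℝ) (N i m : ℕ) : ℝ := pCoef ν i m + qCoef ν N i m

/-- The L1 coefficients `l_s = (s+1)^(1-γ) - s^(1-γ)` of the Caputo discretization. -/
noncomputable def lCoef (γ : ℝ) (s : ℕ) : ℝ := ((s : ℝ) + 1) ^ (1 - γ) - (s : ℝ) ^ (1 - γ)

/-- The Riesz constant `κ_ν = 1 / (2 cos(νπ/2))`. -/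
noncomputable def kappa (ν : ℝ) : ℝ := 1 / (2 * Real.cos (ν * Real.pi / 2))

/-- The maximum of `|v i|` over `0 ≤ i ≤ N`. -/
noncomputable def maxAbs (N : ℕ) (v : ℕ → ℝ) : ℝ :=
  (Finset.range (N + 1)).sup' Finset.nonempty_range_add_one fun i => |v i|

/-- The maximum of `|v i j|` over `0 ≤ i ≤ Nx`, `0 ≤ j ≤ Ny`. -/
noncomputable def maxAbs2 (Nx Ny : ℕ) (v : ℕ → ℕ → ℝ) : ℝ :=
  ((Finset.range (Nx + 1)) ×ˢ (Finset.range (Ny + 1))).sup'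
    (Finset.nonempty_range_add_one.product Finset.nonempty_range_add_one) fun p => |v p.1 p.2|

open Real Set

namespace FracAux


/-- centered second difference of `x ^ (3-ν)` -/
noncomputable def Dv (ν : ℝ) (x : ℝ) : ℝ :=
  (x+1) ^ (3-ν) - 2 * x ^ (3-ν) + (x-1) ^ (3-ν)

variable {ν : ℝ}

lemma hasDerivAt_shift (q c x : ℝ) (h : x + c ≠ 0) :
    HasDerivAt (fun y : ℝ => (y + c) ^ q) (q * (x + c) ^ (q - 1)) x := by
  have h1 : HasDerivAt (fun y : ℝ => y + c) 1 x := (hasDerivAt_id x).add_const c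
  have h2 := (Real.hasDerivAt_rpow_const (x := x + c) (p := q) (Or.inl h)).comp x h1
  rw [mul_one] at h2
  exact h2

lemma cont_shift (q c : ℝ) (hq : 0 < q) : Continuous (fun y : ℝ => (y + c) ^ q) := by
  rw [continuous_iff_continuousAt]
  intro x
  have h1 : Continuous fun y : ℝ => y + c := continuous_add_right c
  exact ContinuousAt.comp (g := fun z : ℝ => z ^ q) (f := fun y : ℝ => y + c)
    (Real.continuousAt_rpow_const (x + c) q (Or.inr hq.le)) h1.continuousAt

lemma Dv_eq_shift : Dv ν = fun x : ℝ => (x+1)^(3-ν) - 2*(x+0)^(3-ν) + (x + -1)^(3-ν) := by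
  funext x; simp [Dv, sub_eq_add_neg]

lemma Dv_continuous (hν2 : ν ≤ 2) : Continuous (Dv ν) := by
  have hq : (0:ℝ) < 3 - ν := by linarith
  rw [Dv_eq_shift]
  exact ((cont_shift _ 1 hq).sub (continuous_const.mul (cont_shift _ 0 hq))).add
    (cont_shift _ (-1) hq)

lemma Dv_hasDerivAt {x : ℝ} (hx : 1 < x) :
    HasDerivAt (Dv ν)
      ((3-ν) * (x+1)^(3-ν-1) - 2 * ((3-ν) * (x+0)^(3-ν-1)) + (3-ν) * (x + -1)^(3-ν-1)) x := by
  rw [Dv_eq_shift]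
  have h1 := hasDerivAt_shift (3-ν) 1 x (by intro h; linarith [h])
  have h2 := hasDerivAt_shift (3-ν) 0 x (by intro h; linarith [h])
  have h3 := hasDerivAt_shift (3-ν) (-1) x (by intro h; linarith [h])
  exact (h1.sub (h2.const_mul 2)).add h3

/-- convexity of `x ^ q` for `q ≤ 0` on positive reals -/
lemma convexOn_rpow_nonpos {q : ℝ} (hq : q ≤ 0) :
    ConvexOn ℝ (Ioi (0:ℝ)) (fun x : ℝ => x ^ q) := by
  have hio : interior (Ioi (0:ℝ)) = Ioi 0 := interior_Ioi
  refine convexOn_of_hasDerivWithinAt2_nonneg (f' := fun x => q * x ^ (q-1))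
    (f'' := fun x => q * ((q-1) * x ^ (q-2))) (convex_Ioi 0) ?_ ?_ ?_ ?_
  · intro x hx
    exact (Real.continuousAt_rpow_const x q (Or.inl (ne_of_gt hx))).continuousWithinAt
  · intro x hx
    rw [hio] at hx ⊢
    exact (Real.hasDerivAt_rpow_const (Or.inl (ne_of_gt hx))).hasDerivWithinAt
  · intro x hx
    rw [hio] at hx ⊢
    have h := (Real.hasDerivAt_rpow_const (x := x) (p := q - 1)
      (Or.inl (ne_of_gt hx))).const_mul q
    have h' : HasDerivAt (fun y : ℝ => q * y ^ (q-1)) (q * ((q-1) * x ^ (q-2))) x := by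
      rw [show q - 2 = q - 1 - 1 by ring]; exact h
    exact h'.hasDerivWithinAt
  · intro x hx
    rw [hio] at hx
    have h1 : 0 ≤ q * (q - 1) := by nlinarith
    have h2 : (0:ℝ) ≤ x ^ (q-2) := (Real.rpow_pos_of_pos hx _).le
    have := mul_nonneg h1 h2
    show (0:ℝ) ≤ q * ((q-1) * x ^ (q-2))
    nlinarith

lemma Dv_convex (hν1 : 1 ≤ ν) (hν2 : ν ≤ 2) :
    ConvexOn ℝ (Ici (1:ℝ)) (Dv ν) := by
  have he1 : (1:ℝ) ≤ 3 - ν := by linarith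
  have hio : interior (Ici (1:ℝ)) = Ioi 1 := interior_Ici
  refine convexOn_of_hasDerivWithinAt2_nonneg
    (f' := fun x => (3-ν) * (x+1)^(3-ν-1) - 2 * ((3-ν) * (x+0)^(3-ν-1))
      + (3-ν) * (x + -1)^(3-ν-1))
    (f'' := fun x => ((3-ν) * ((3-ν-1) * (x+1)^(3-ν-1-1))
      - 2 * ((3-ν) * ((3-ν-1) * (x+0)^(3-ν-1-1))))
      + (3-ν) * ((3-ν-1) * (x + -1)^(3-ν-1-1)))
    (convex_Ici 1) (Dv_continuous hν2).continuousOn ?_ ?_ ?_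
  · intro x hx
    rw [hio] at hx ⊢
    exact (Dv_hasDerivAt hx).hasDerivWithinAt
  · intro x hx
    rw [hio] at hx ⊢
    have hx1 : (1:ℝ) < x := hx
    have h1 := (hasDerivAt_shift (3-ν-1) 1 x (by intro h; linarith [h])).const_mul (3-ν)
    have h2 := (hasDerivAt_shift (3-ν-1) 0 x (by intro h; linarith [h])).const_mul (3-ν)
    have h3 := (hasDerivAt_shift (3-ν-1) (-1) x (by intro h; linarith [h])).const_mul (3-ν)
    exact ((h1.sub (h2.const_mul 2)).add h3).hasDerivWithinAt
  · intro x hx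
    rw [hio] at hx
    have hx1 : (1:ℝ) < x := hx
    have hcv := convexOn_rpow_nonpos (q := 3-ν-1-1) (by linarith)
    have hmem1 : x - 1 ∈ Ioi (0:ℝ) := by simp; linarith
    have hmem2 : x + 1 ∈ Ioi (0:ℝ) := by simp; linarith
    have h12 : (0:ℝ) ≤ 1/2 := by norm_num
    have hmi := hcv.2 hmem1 hmem2 h12 h12 (by norm_num)
    have hmid : (1/2 : ℝ) • (x - 1) + (1/2 : ℝ) • (x + 1) = x := by
      simp [smul_eq_mul]; ring
    rw [hmid] at hmi
    simp only [smul_eq_mul] at hmi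
    have hfac : 0 ≤ (3-ν) * (3-ν-1) := by nlinarith
    have hkey := mul_nonneg hfac (sub_nonneg.2 hmi)
    show (0:ℝ) ≤ ((3-ν) * ((3-ν-1) * (x+1)^(3-ν-1-1))
      - 2 * ((3-ν) * ((3-ν-1) * (x+0)^(3-ν-1-1)))) + (3-ν) * ((3-ν-1) * (x + -1)^(3-ν-1-1))
    have hx0 : x + 0 = x := add_zero x
    have hxm : x + -1 = x - 1 := by ring
    rw [hx0, hxm]
    nlinarith [hkey]

lemma Dv_anti (hν1 : 1 ≤ ν) (hν2 : ν ≤ 2) :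
    AntitoneOn (Dv ν) (Ici (1:ℝ)) := by
  have he1 : (1:ℝ) ≤ 3 - ν := by linarith
  have hio : interior (Ici (1:ℝ)) = Ioi 1 := interior_Ici
  refine antitoneOn_of_hasDerivWithinAt_nonpos
    (f' := fun x => (3-ν) * (x+1)^(3-ν-1) - 2 * ((3-ν) * (x+0)^(3-ν-1))
      + (3-ν) * (x + -1)^(3-ν-1))
    (convex_Ici 1) (Dv_continuous hν2).continuousOn ?_ ?_
  · intro x hx
    rw [hio] at hx ⊢
    exact (Dv_hasDerivAt hx).hasDerivWithinAt
  · intro x hx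
    rw [hio] at hx
    have hx1 : (1:ℝ) < x := hx
    have hcc := Real.concaveOn_rpow (p := 3-ν-1) (by linarith) (by linarith)
    have hmem1 : x - 1 ∈ Ici (0:ℝ) := by simp; linarith
    have hmem2 : x + 1 ∈ Ici (0:ℝ) := by simp; linarith
    have h12 : (0:ℝ) ≤ 1/2 := by norm_num
    have hmi := hcc.2 hmem1 hmem2 h12 h12 (by norm_num)
    have hmid : (1/2 : ℝ) • (x - 1) + (1/2 : ℝ) • (x + 1) = x := by
      simp [smul_eq_mul]; ring
    rw [hmid] at hmi
    simp only [smul_eq_mul] at hmi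
    have hkey := mul_nonneg (by linarith : (0:ℝ) ≤ 3 - ν) (sub_nonneg.2 hmi)
    show ((3-ν) * (x+1)^(3-ν-1) - 2 * ((3-ν) * (x+0)^(3-ν-1))
      + (3-ν) * (x + -1)^(3-ν-1)) ≤ 0
    have hx0 : x + 0 = x := add_zero x
    have hxm : x + -1 = x - 1 := by ring
    rw [hx0, hxm]
    nlinarith [hkey]

/-- `3^p - 4·2^p + 7 ≥ 0` on `[1,2]` -/
lemma phi_nonneg {p : ℝ} (hp1 : 1 ≤ p) (hp2 : p ≤ 2) :
    0 ≤ (3:ℝ)^p - 4*(2:ℝ)^p + 7 := by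
  have hanti : AntitoneOn (fun p : ℝ => (3:ℝ)^p - 4*(2:ℝ)^p) (Icc 1 2) := by
    have hio : interior (Icc (1:ℝ) 2) = Ioo 1 2 := interior_Icc
    refine antitoneOn_of_hasDerivWithinAt_nonpos
      (f' := fun p => (3:ℝ)^p * Real.log 3 - 4 * ((2:ℝ)^p * Real.log 2))
      (convex_Icc 1 2) ?_ ?_ ?_
    · have c3 : Continuous (fun p : ℝ => (3:ℝ)^p) := continuous_iff_continuousAt.2 fun x =>
        ((Real.hasStrictDerivAt_const_rpow (by norm_num : (0:ℝ) < 3) x).hasDerivAt).continuousAt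
      have c2 : Continuous (fun p : ℝ => (2:ℝ)^p) := continuous_iff_continuousAt.2 fun x =>
        ((Real.hasStrictDerivAt_const_rpow (by norm_num : (0:ℝ) < 2) x).hasDerivAt).continuousAt
      exact (c3.sub (continuous_const.mul c2)).continuousOn
    · intro x hx
      rw [hio] at hx ⊢
      have h3 := (Real.hasStrictDerivAt_const_rpow (by norm_num : (0:ℝ) < 3) x).hasDerivAt
      have h2 := ((Real.hasStrictDerivAt_const_rpow (by norm_num : (0:ℝ) < 2) x).hasDerivAt).const_mul 4
      exact (h3.sub h2).hasDerivWithinAt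
    · intro x hx
      rw [hio] at hx
      obtain ⟨hx1, hx2⟩ := hx
      have hlog2 : (0:ℝ) < Real.log 2 := Real.log_pos (by norm_num)
      have hlog3 : (0:ℝ) < Real.log 3 := Real.log_pos (by norm_num)
      have h2p : (0:ℝ) < (2:ℝ)^x := Real.rpow_pos_of_pos (by norm_num) _
      have hsplit : (3:ℝ)^x = (3/2:ℝ)^x * (2:ℝ)^x := by
        rw [← Real.mul_rpow (by norm_num) (by norm_num)]; norm_num
      have hb : ((3:ℝ)/2)^x ≤ ((3:ℝ)/2)^(2:ℝ) :=
        Real.rpow_le_rpow_of_exponent_le (by norm_num) hx2.le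
      have hb2 : ((3:ℝ)/2)^(2:ℝ) = 9/4 := by
        rw [show (2:ℝ) = ((2:ℕ):ℝ) by norm_num, Real.rpow_natCast]; norm_num
      have hlog : (9/4:ℝ) * Real.log 3 ≤ 4 * Real.log 2 := by
        have h9 : Real.log ((3:ℝ)^(9:ℕ)) ≤ Real.log ((2:ℝ)^(16:ℕ)) := by
          apply Real.log_le_log (by norm_num)
          norm_num
        rw [Real.log_pow, Real.log_pow] at h9
        push_cast at h9
        linarith
      have key : ((3:ℝ)/2)^x * Real.log 3 ≤ 4 * Real.log 2 := by
        calc ((3:ℝ)/2)^x * Real.log 3 ≤ (9/4) * Real.log 3 := by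
              apply mul_le_mul_of_nonneg_right _ hlog3.le
              rw [← hb2]; exact hb
        _ ≤ 4 * Real.log 2 := hlog
      show (3:ℝ)^x * Real.log 3 - 4 * ((2:ℝ)^x * Real.log 2) ≤ 0
      rw [hsplit]
      calc (3/2:ℝ)^x * (2:ℝ)^x * Real.log 3 - 4 * ((2:ℝ)^x * Real.log 2)
          = ((3/2:ℝ)^x * Real.log 3 - 4 * Real.log 2) * (2:ℝ)^x := by ring
      _ ≤ 0 := mul_nonpos_of_nonpos_of_nonneg (by linarith) h2p.le
  have h2m : (2:ℝ) ∈ Icc (1:ℝ) 2 := by norm_num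
  have hpm : p ∈ Icc (1:ℝ) 2 := ⟨hp1, hp2⟩
  have := hanti hpm h2m hp2
  have hv : (3:ℝ)^(2:ℝ) - 4*(2:ℝ)^(2:ℝ) = -7 := by
    rw [show (2:ℝ) = ((2:ℕ):ℝ) by norm_num, Real.rpow_natCast, Real.rpow_natCast]; norm_num
  simp only [hv] at this
  linarith

lemma two_rpow_le (hν1 : 1 ≤ ν) : (2:ℝ)^(3-ν) ≤ 4 := by
  have h : (2:ℝ)^(3-ν) ≤ (2:ℝ)^(2:ℝ) :=
    Real.rpow_le_rpow_of_exponent_le (by norm_num) (by linarith)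
  have hv : (2:ℝ)^(2:ℝ) = 4 := by
    rw [show (2:ℝ) = ((2:ℕ):ℝ) by norm_num, Real.rpow_natCast]; norm_num
  linarith


/-! ### coefficient evaluations -/

lemma aCoef_diag (j : ℕ) : aCoef ν j j = 1 := by simp [aCoef]

lemma aCoef_D {j m : ℕ} (h1 : 1 ≤ m) (h2 : m < j) :
    aCoef ν j m = Dv ν ((j - m : ℕ) : ℝ) := by
  have hne : m ≠ j := by omega
  have hne0 : m ≠ 0 := by omega
  rw [aCoef, if_neg hne, if_neg hne0, Dv, Nat.cast_sub h2.le]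

lemma Dv_one (hν2 : ν ≤ 2) : Dv ν 1 = 2 ^ (3-ν) - 2 := by
  have h0 : ((0:ℝ)) ^ (3-ν) = 0 := Real.zero_rpow (by intro h; linarith)
  norm_num [Dv, h0, Real.one_rpow]

lemma Dv_two : Dv ν 2 = 3 ^ (3-ν) - 2 * 2 ^ (3-ν) + 1 := by
  norm_num [Dv, Real.one_rpow]

lemma pCoef_up (i : ℕ) : pCoef ν i (i+1) = 1 := by
  rw [pCoef, if_neg (by omega), if_neg (by omega), if_pos rfl, aCoef_diag]

lemma pCoef_diag (hν2 : ν ≤ 2) {i : ℕ} (hi : 1 ≤ i) : pCoef ν i i = 2 ^ (3-ν) - 4 := by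
  rw [pCoef, if_neg (by omega), if_pos rfl, aCoef_diag,
    aCoef_D hi (by omega : i < i + 1)]
  have : (i + 1 - i : ℕ) = 1 := by omega
  rw [this, Nat.cast_one, Dv_one hν2]
  ring

lemma pCoef_zero {i m : ℕ} (h : i + 1 < m) : pCoef ν i m = 0 := by
  rw [pCoef, if_neg (by omega), if_neg (by omega), if_neg (by omega)]

lemma pCoef_low {i m : ℕ} (h1 : 1 ≤ m) (h2 : m + 2 ≤ i) :
    pCoef ν i m = Dv ν (((i-m:ℕ):ℝ) - 1) - 2 * Dv ν ((i-m:ℕ):ℝ) + Dv ν (((i-m:ℕ):ℝ) + 1) := by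
  rw [pCoef, if_pos (by omega),
    aCoef_D h1 (by omega : m < i - 1), aCoef_D h1 (by omega : m < i),
    aCoef_D h1 (by omega : m < i + 1)]
  have e1 : (i - 1 - m : ℕ) = (i - m) - 1 := by omega
  have e2 : (i + 1 - m : ℕ) = (i - m) + 1 := by omega
  rw [e1, e2, Nat.cast_sub (by omega : 1 ≤ i - m), Nat.cast_add, Nat.cast_one]

lemma pCoef_low_nonneg (hν1 : 1 ≤ ν) (hν2 : ν ≤ 2) {i m : ℕ} (h1 : 1 ≤ m) (h2 : m + 2 ≤ i) :
    0 ≤ pCoef ν i m := by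
  rw [pCoef_low h1 h2]
  set r : ℝ := ((i - m : ℕ) : ℝ) with hr
  have hr2 : (2:ℝ) ≤ r := by
    rw [hr]; exact_mod_cast (by omega : 2 ≤ i - m)
  have hcv := Dv_convex hν1 hν2
  have hm1 : r - 1 ∈ Set.Ici (1:ℝ) := by simp; linarith
  have hm2 : r + 1 ∈ Set.Ici (1:ℝ) := by simp; linarith
  have h12 : (0:ℝ) ≤ 1/2 := by norm_num
  have hmi := hcv.2 hm1 hm2 h12 h12 (by norm_num)
  have hmid : (1/2 : ℝ) • (r - 1) + (1/2 : ℝ) • (r + 1) = r := by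
    simp [smul_eq_mul]; ring
  rw [hmid] at hmi
  simp only [smul_eq_mul] at hmi
  linarith

lemma pCoef_near (hν1 : 1 ≤ ν) (hν2 : ν ≤ 2) {i : ℕ} (h2 : 2 ≤ i) :
    pCoef ν i (i-1) = 3 ^ (3-ν) - 4 * 2 ^ (3-ν) + 6 := by
  have hd : aCoef ν (i-1) (i-1) = 1 := aCoef_diag _
  rw [pCoef, if_pos (by omega : i - 1 < i), hd,
    aCoef_D (by omega : 1 ≤ i - 1) (by omega : i - 1 < i),
    aCoef_D (by omega : 1 ≤ i - 1) (by omega : i - 1 < i + 1)]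
  have e1 : (i - (i-1) : ℕ) = 1 := by omega
  have e2 : (i + 1 - (i-1) : ℕ) = 2 := by omega
  rw [e1, e2, Nat.cast_one, Nat.cast_two, Dv_one hν2, Dv_two]
  ring

lemma pCoef_near_nonneg (hν1 : 1 ≤ ν) (hν2 : ν ≤ 2) {i : ℕ} (h2 : 2 ≤ i) :
    0 ≤ pCoef ν i (i-1) + 1 := by
  rw [pCoef_near hν1 hν2 h2]
  have := phi_nonneg (p := 3 - ν) (by linarith) (by linarith)
  linarith


/-! ### row sums -/

/-- `Hf j = j^(3-ν) - (j-1)^(3-ν)` -/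
noncomputable def Hf (ν : ℝ) (j : ℕ) : ℝ := (j:ℝ) ^ (3-ν) - ((j:ℝ) - 1) ^ (3-ν)

lemma Hf_one (hν2 : ν ≤ 2) : Hf ν 1 = 1 := by
  have h0 : ((0:ℝ)) ^ (3-ν) = 0 := Real.zero_rpow (by intro h; linarith)
  norm_num [Hf, Real.one_rpow, h0]

lemma Dv_telescope (r : ℕ) : Dv ν ((r:ℕ):ℝ) = Hf ν (r+1) - Hf ν r := by
  unfold Dv Hf
  push_cast
  rw [show ((r:ℝ) + 1) - 1 = (r:ℝ) by ring]
  ring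

lemma sum_Dv (n : ℕ) : ∑ r ∈ Finset.Icc 1 n, Dv ν ((r:ℕ):ℝ) = Hf ν (n+1) - Hf ν 1 := by
  induction n with
  | zero => simp
  | succ n ih =>
    rw [Finset.sum_Icc_succ_top (by omega), ih, Dv_telescope]
    ring

lemma sum_a (hν2 : ν ≤ 2) {j : ℕ} (hj : 1 ≤ j) :
    ∑ m ∈ Finset.Icc 1 j, aCoef ν j m = Hf ν j := by
  obtain ⟨n, rfl⟩ : ∃ n, j = n + 1 := ⟨j - 1, by omega⟩
  rw [Finset.sum_Icc_succ_top (by omega), aCoef_diag]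
  have hstep : ∑ m ∈ Finset.Icc 1 n, aCoef ν (n+1) m
      = ∑ m ∈ Finset.Icc 1 n, Dv ν (((n+1-m:ℕ)):ℝ) := by
    apply Finset.sum_congr rfl
    intro m hm
    simp only [Finset.mem_Icc] at hm
    exact aCoef_D hm.1 (by omega)
  rw [hstep]
  have hre : ∑ m ∈ Finset.Icc 1 n, Dv ν (((n+1-m:ℕ)):ℝ)
      = ∑ r ∈ Finset.Icc 1 n, Dv ν ((r:ℕ):ℝ) := by
    apply Finset.sum_nbij' (i := fun m => n + 1 - m) (j := fun r => n + 1 - r)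
    · intro a ha; simp only [Finset.mem_Icc] at *; omega
    · intro a ha; simp only [Finset.mem_Icc] at *; omega
    · intro a ha; simp only [Finset.mem_Icc] at ha; omega
    · intro a ha; simp only [Finset.mem_Icc] at ha; omega
    · intro a ha; rfl
  rw [hre, sum_Dv, Hf_one hν2]
  ring

lemma sum_p_core (hν2 : ν ≤ 2) (n : ℕ) :
    ∑ m ∈ Finset.Icc 1 (n+3), pCoef ν (n+2) m
      = Dv ν ((n:ℝ)+2) - Dv ν ((n:ℝ)+1) := by
  rw [Finset.sum_Icc_succ_top (by omega : 1 ≤ n + 3),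
    Finset.sum_Icc_succ_top (by omega : 1 ≤ n + 2)]
  have hup : pCoef ν (n+2) (n+3) = 1 := pCoef_up (n+2)
  have hdg : pCoef ν (n+2) (n+2) = 2 ^ (3-ν) - 4 := pCoef_diag hν2 (by omega)
  have hlow : ∑ m ∈ Finset.Icc 1 (n+1), pCoef ν (n+2) m
      = ∑ m ∈ Finset.Icc 1 (n+1), (aCoef ν (n+1) m - 2 * aCoef ν (n+2) m + aCoef ν (n+3) m) := by
    apply Finset.sum_congr rfl
    intro m hm
    simp only [Finset.mem_Icc] at hm
    rw [pCoef, if_pos (by omega)]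
    congr 2 <;> congr 1 <;> omega
  rw [hup, hdg, hlow]
  rw [Finset.sum_add_distrib, Finset.sum_sub_distrib, ← Finset.mul_sum]
  have hS1 : ∑ m ∈ Finset.Icc 1 (n+1), aCoef ν (n+1) m = Hf ν (n+1) := sum_a hν2 (by omega)
  have hS2 : ∑ m ∈ Finset.Icc 1 (n+1), aCoef ν (n+2) m = Hf ν (n+2) - 1 := by
    have := sum_a hν2 (j := n+2) (by omega)
    rw [Finset.sum_Icc_succ_top (by omega : 1 ≤ n+2), aCoef_diag] at this
    linarith
  have hS3 : ∑ m ∈ Finset.Icc 1 (n+1), aCoef ν (n+3) m = Hf ν (n+3) - 1 - Dv ν 1 := by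
    have h3 := sum_a hν2 (j := n+3) (by omega)
    rw [Finset.sum_Icc_succ_top (by omega : 1 ≤ n+3), aCoef_diag,
      Finset.sum_Icc_succ_top (by omega : 1 ≤ n+2),
      aCoef_D (by omega : 1 ≤ n+2) (by omega : n+2 < n+3)] at h3
    have e1 : (n + 3 - (n+2) : ℕ) = 1 := by omega
    rw [e1, Nat.cast_one] at h3
    linarith
  rw [hS1, hS2, hS3, Dv_one hν2]
  have hHD : Hf ν (n+1) - 2 * (Hf ν (n+2) - 1) + (Hf ν (n+3) - 1 - (2 ^ (3-ν) - 2))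
      + (2 ^ (3-ν) - 4) + 1 = Hf ν (n+1) - 2 * Hf ν (n+2) + Hf ν (n+3) := by ring
  have hkey : Hf ν (n+1) - 2 * Hf ν (n+2) + Hf ν (n+3)
      = Dv ν ((n:ℝ)+2) - Dv ν ((n:ℝ)+1) := by
    unfold Hf Dv
    push_cast
    rw [show ((n:ℝ) + 1) - 1 = (n:ℝ) by ring, show ((n:ℝ) + 2) - 1 = (n:ℝ) + 1 by ring,
      show ((n:ℝ) + 3) - 1 = (n:ℝ) + 2 by ring, show ((n:ℝ) + 2) + 1 = (n:ℝ) + 3 by ring,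
      show ((n:ℝ) + 1) + 1 = (n:ℝ) + 2 by ring]
    ring
  linarith [hHD, hkey]


lemma core_nonpos (hν1 : 1 ≤ ν) (hν2 : ν ≤ 2) (n : ℕ) :
    ∑ m ∈ Finset.Icc 1 (n+3), pCoef ν (n+2) m ≤ 0 := by
  rw [sum_p_core hν2]
  have hn0 : (0:ℝ) ≤ (n:ℝ) := Nat.cast_nonneg n
  have h1 : ((n:ℝ)+1) ∈ Set.Ici (1:ℝ) := by rw [Set.mem_Ici]; linarith
  have h2 : ((n:ℝ)+2) ∈ Set.Ici (1:ℝ) := by rw [Set.mem_Ici]; linarith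
  have := Dv_anti hν1 hν2 h1 h2 (by linarith)
  linarith

lemma sum_p_one (hν2 : ν ≤ 2) : ∑ m ∈ Finset.Icc 1 2, pCoef ν 1 m = 2 ^ (3-ν) - 3 := by
  rw [Finset.sum_Icc_succ_top (by omega : 1 ≤ 2), Finset.Icc_self, Finset.sum_singleton,
    pCoef_diag hν2 (by omega), pCoef_up 1]
  ring

/-- master bound on the interior row sum of `p` coefficients -/
lemma sum_p_le (hν1 : 1 ≤ ν) (hν2 : ν ≤ 2) {i N : ℕ} (h1 : 1 ≤ i) (h2 : i ≤ N - 1)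
    (hN : 2 ≤ N) :
    ∑ m ∈ Finset.Icc 1 (N-1), pCoef ν i m
      ≤ (if i = 1 then (2:ℝ) ^ (3-ν) - 3 else 0) - (if i = N-1 then 1 else 0) := by
  by_cases hi1 : i = 1
  · subst hi1
    by_cases hN2 : N = 2
    · subst hN2
      rw [if_pos rfl, if_pos (by norm_num : (1:ℕ) = 2 - 1)]
      rw [show (2:ℕ)-1 = 1 from rfl, Finset.Icc_self, Finset.sum_singleton,
        pCoef_diag hν2 le_rfl]
      ring_nf
      linarith
    · have hN3 : 3 ≤ N := by omega
      have hiN : (1:ℕ) ≠ N - 1 := by omega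
      rw [if_pos rfl, if_neg hiN]
      have hsub : Finset.Icc 1 2 ⊆ Finset.Icc 1 (N-1) := by
        apply Finset.Icc_subset_Icc_right; omega
      have heq : ∑ m ∈ Finset.Icc 1 (N-1), pCoef ν 1 m = ∑ m ∈ Finset.Icc 1 2, pCoef ν 1 m := by
        symm
        apply Finset.sum_subset hsub
        intro x hx hnx
        simp only [Finset.mem_Icc] at hx hnx
        exact pCoef_zero (by omega)
      rw [heq, sum_p_one hν2]
      linarith
  · have hi2 : 2 ≤ i := by omega
    obtain ⟨n, rfl⟩ : ∃ n, i = n + 2 := ⟨i - 2, by omega⟩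
    rw [if_neg hi1]
    by_cases hiN : n + 2 = N - 1
    · rw [if_pos hiN]
      have hNn : N - 1 = n + 2 := hiN.symm
      rw [hNn]
      have := core_nonpos hν1 hν2 n
      rw [Finset.sum_Icc_succ_top (by omega : 1 ≤ n + 3), pCoef_up] at this
      linarith
    · rw [if_neg hiN]
      have hle : n + 3 ≤ N - 1 := by omega
      have hsub : Finset.Icc 1 (n+3) ⊆ Finset.Icc 1 (N-1) :=
        Finset.Icc_subset_Icc_right hle
      have heq : ∑ m ∈ Finset.Icc 1 (N-1), pCoef ν (n+2) m
          = ∑ m ∈ Finset.Icc 1 (n+3), pCoef ν (n+2) m := by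
        symm
        apply Finset.sum_subset hsub
        intro x hx hnx
        simp only [Finset.mem_Icc] at hx hnx
        exact pCoef_zero (by omega)
      rw [heq]
      simpa using core_nonpos hν1 hν2 n

/-! ### symmetry between `q` and `p` -/

lemma bCoef_eq {N j m : ℕ} (hj : j ≤ N) (hm : m ≤ N) :
    bCoef ν N j m = aCoef ν (N-j) (N-m) := by
  rw [bCoef, aCoef]
  by_cases hd : m = j
  · rw [if_pos hd, if_pos (by omega)]
  · rw [if_neg hd, if_neg (by omega : ¬ (N - m = N - j))]
    by_cases hN : m = N
    · rw [if_pos hN, if_pos (by omega : N - m = 0)]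
      rw [Nat.cast_sub hj]
      subst hN
      ring
    · rw [if_neg hN, if_neg (by omega : ¬ (N - m = 0))]
      rw [Nat.cast_sub hj, Nat.cast_sub hm]
      ring_nf

lemma qCoef_eq {N i m : ℕ} (h1 : 1 ≤ i) (h2 : i ≤ N - 1) (hN : 2 ≤ N) (hm : m ≤ N) :
    qCoef ν N i m = pCoef ν (N-i) (N-m) := by
  have hiN : i ≤ N := by omega
  have hiN' : i < N := by omega
  rw [qCoef, pCoef]
  by_cases hc1 : m + 1 < i
  · rw [if_pos hc1, if_neg (by omega : ¬ (N - m < N - i)), if_neg (by omega : ¬ (N - m = N - i)),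
      if_neg (by omega : ¬ (N - m = N - i + 1))]
  · rw [if_neg hc1]
    by_cases hc2 : m + 1 = i
    · rw [if_pos hc2, if_neg (by omega : ¬ (N - m < N - i)), if_neg (by omega : ¬ (N - m = N - i)),
        if_pos (by omega : N - m = N - i + 1)]
      rw [aCoef_diag, bCoef]
      rw [if_pos rfl]
    · rw [if_neg hc2]
      by_cases hc3 : m = i
      · rw [if_pos hc3, if_neg (by omega : ¬ (N - m < N - i)), if_pos (by omega : N - m = N - i)]
        subst hc3
        rw [bCoef_eq (by omega) (by omega), bCoef_eq (by omega) (by omega)]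
        have e1 : N - (m - 1) = N - m + 1 := by omega
        have e2 : N - m = N - m := rfl
        rw [e1]
      · -- i < m
        have him : i < m := by omega
        rw [if_neg hc3, if_pos (by omega : N - m < N - i)]
        rw [bCoef_eq (by omega : i - 1 ≤ N) hm, bCoef_eq (by omega : i ≤ N) hm,
          bCoef_eq (by omega : i + 1 ≤ N) hm]
        have e1 : N - (i - 1) = N - i + 1 := by omega
        have e2 : N - (i + 1) = N - i - 1 := by omega
        rw [e1, e2]
        ring


/-! ### the `g` coefficients -/

lemma qCoef_diag_eval (hν2 : ν ≤ 2) {N i : ℕ} (h1 : 1 ≤ i) (h2 : i ≤ N - 1) (hN : 2 ≤ N) :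
    qCoef ν N i i = 2 ^ (3-ν) - 4 := by
  rw [qCoef_eq h1 h2 hN (by omega), pCoef_diag hν2 (by omega : 1 ≤ N - i)]

lemma gCoef_diag_nonpos (hν1 : 1 ≤ ν) (hν2 : ν ≤ 2) {N i : ℕ} (h1 : 1 ≤ i) (h2 : i ≤ N - 1)
    (hN : 2 ≤ N) : gCoef ν N i i ≤ 0 := by
  rw [gCoef, pCoef_diag hν2 h1, qCoef_diag_eval hν2 h1 h2 hN]
  have := two_rpow_le (ν := ν) hν1
  linarith

lemma gCoef_offdiag_nonneg (hν1 : 1 ≤ ν) (hν2 : ν ≤ 2) {N i m : ℕ} (h1 : 1 ≤ i)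
    (h2 : i ≤ N - 1) (hN : 2 ≤ N) (hm1 : 1 ≤ m) (hm2 : m ≤ N - 1) (hne : m ≠ i) :
    0 ≤ gCoef ν N i m := by
  rw [gCoef]
  rcases lt_or_gt_of_ne hne with hlt | hgt
  · -- m < i
    by_cases hnear : m + 1 = i
    · -- m = i - 1
      have hq : qCoef ν N i m = 1 := by
        rw [qCoef, if_neg (by omega), if_pos hnear]
        have : i - 1 = m := by omega
        rw [this, bCoef, if_pos rfl]
      rw [hq]
      have hmm : m = i - 1 := by omega
      rw [hmm]
      exact pCoef_near_nonneg hν1 hν2 (by omega)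
    · -- m ≤ i - 2
      have hq : qCoef ν N i m = 0 := by rw [qCoef, if_pos (by omega)]
      rw [hq, add_zero]
      exact pCoef_low_nonneg hν1 hν2 hm1 (by omega)
  · -- i < m
    have hqe : qCoef ν N i m = pCoef ν (N-i) (N-m) := qCoef_eq h1 h2 hN (by omega)
    by_cases hnear : m = i + 1
    · have hp : pCoef ν i m = 1 := by rw [hnear]; exact pCoef_up i
      rw [hp, hqe]
      have hNm : N - m = (N - i) - 1 := by omega
      rw [hNm]
      have := pCoef_near_nonneg hν1 hν2 (i := N - i) (by omega)
      linarith
    · have hp : pCoef ν i m = 0 := pCoef_zero (by omega)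
      rw [hp, hqe, zero_add]
      exact pCoef_low_nonneg hν1 hν2 (by omega) (by omega)

lemma sum_q_eq (hν2 : ν ≤ 2) {N i : ℕ} (h1 : 1 ≤ i) (h2 : i ≤ N - 1) (hN : 2 ≤ N) :
    ∑ m ∈ Finset.Icc 1 (N-1), qCoef ν N i m
      = ∑ m ∈ Finset.Icc 1 (N-1), pCoef ν (N-i) m := by
  have hstep : ∑ m ∈ Finset.Icc 1 (N-1), qCoef ν N i m
      = ∑ m ∈ Finset.Icc 1 (N-1), pCoef ν (N-i) (N-m) := by
    apply Finset.sum_congr rfl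
    intro m hm
    simp only [Finset.mem_Icc] at hm
    exact qCoef_eq h1 h2 hN (by omega)
  rw [hstep]
  apply Finset.sum_nbij' (i := fun m => N - m) (j := fun m => N - m)
  · intro a ha; simp only [Finset.mem_Icc] at *; omega
  · intro a ha; simp only [Finset.mem_Icc] at *; omega
  · intro a ha; simp only [Finset.mem_Icc] at ha; omega
  · intro a ha; simp only [Finset.mem_Icc] at ha; omega
  · intro a ha; rfl

/-- interior row sums of the Riesz coefficients are nonpositive -/
lemma gCoef_rowsum_nonpos (hν1 : 1 ≤ ν) (hν2 : ν ≤ 2) {N i : ℕ} (h1 : 1 ≤ i)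
    (h2 : i ≤ N - 1) (hN : 2 ≤ N) :
    ∑ m ∈ Finset.Icc 1 (N-1), gCoef ν N i m ≤ 0 := by
  have hsplit : ∑ m ∈ Finset.Icc 1 (N-1), gCoef ν N i m
      = ∑ m ∈ Finset.Icc 1 (N-1), pCoef ν i m + ∑ m ∈ Finset.Icc 1 (N-1), qCoef ν N i m := by
    rw [← Finset.sum_add_distrib]
    rfl
  rw [hsplit, sum_q_eq hν2 h1 h2 hN]
  have hA := sum_p_le hν1 hν2 h1 h2 hN
  have hB := sum_p_le hν1 hν2 (i := N - i) (by omega) (by omega) hN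
  have htw := two_rpow_le (ν := ν) hν1
  have hiff1 : (N - i = 1) ↔ (i = N - 1) := by omega
  have hiff2 : (N - i = N - 1) ↔ (i = 1) := by omega
  by_cases hx : i = 1 <;> by_cases hy : i = N - 1
  · rw [if_pos hx, if_pos hy] at hA
    rw [if_pos (hiff1.2 hy), if_pos (hiff2.2 hx)] at hB
    linarith
  · rw [if_pos hx, if_neg hy] at hA
    rw [if_neg (by omega : ¬ (N - i = 1)), if_pos (hiff2.2 hx)] at hB
    linarith
  · rw [if_neg hx, if_pos hy] at hA
    rw [if_pos (hiff1.2 hy), if_neg (by omega : ¬ (N - i = N - 1))] at hB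
    linarith
  · rw [if_neg hx, if_neg hy] at hA
    rw [if_neg (by omega : ¬ (N - i = 1)), if_neg (by omega : ¬ (N - i = N - 1))] at hB
    linarith

/-- the final diagonal-dominance style inequality used in the maximum principle -/
lemma gCoef_erase_sum_le (hν1 : 1 ≤ ν) (hν2 : ν ≤ 2) {N i : ℕ} (h1 : 1 ≤ i)
    (h2 : i ≤ N - 1) (hN : 2 ≤ N) :
    ∑ m ∈ (Finset.Icc 1 (N-1)).erase i, gCoef ν N i m ≤ -gCoef ν N i i := by
  have hmem : i ∈ Finset.Icc 1 (N-1) := by simp only [Finset.mem_Icc]; omega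
  have := Finset.sum_erase_add (Finset.Icc 1 (N-1)) (gCoef ν N i) hmem
  have hrow := gCoef_rowsum_nonpos hν1 hν2 h1 h2 hN
  linarith


/-! ### properties of the L1 coefficients -/

lemma concave_inc {f : ℝ → ℝ} (hf : ConcaveOn ℝ (Set.Ici (0:ℝ)) f) {a b : ℝ}
    (ha : 0 ≤ a) (hab : a ≤ b) : f (b+1) - f b ≤ f (a+1) - f a := by
  rcases eq_or_lt_of_le hab with rfl | hlt
  · exact le_rfl
  · set l := 1/(b - a + 1) with hl
    have hd : 0 < b - a + 1 := by linarith
    have hl0 : 0 < l := by positivity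
    have hl1 : l ≤ 1 := by rw [hl, div_le_one hd]; linarith
    have hx : a ∈ Set.Ici (0:ℝ) := ha
    have hy : b + 1 ∈ Set.Ici (0:ℝ) := by rw [Set.mem_Ici]; linarith
    have hdne : b - a + 1 ≠ 0 := ne_of_gt hd
    have e1 : (1 - l) • a + l • (b+1) = a + 1 := by
      simp only [smul_eq_mul, hl]
      field_simp
      ring
    have e2 : l • a + (1 - l) • (b+1) = b := by
      simp only [smul_eq_mul, hl]
      field_simp
      ring
    have g1 := hf.2 hx hy (show (0:ℝ) ≤ 1 - l by linarith) (show (0:ℝ) ≤ l by linarith)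
      (show 1 - l + l = 1 by ring)
    have g2 := hf.2 hx hy (show (0:ℝ) ≤ l by linarith) (show (0:ℝ) ≤ 1 - l by linarith)
      (show l + (1 - l) = 1 by ring)
    rw [e1] at g1
    rw [e2] at g2
    simp only [smul_eq_mul] at g1 g2
    linarith

variable {γ : ℝ}

lemma lCoef_anti (hγ1 : 0 ≤ γ) (hγ2 : γ ≤ 1) {s t : ℕ} (h : s ≤ t) :
    lCoef γ t ≤ lCoef γ s := by
  have hcc := Real.concaveOn_rpow (p := 1 - γ) (by linarith) (by linarith)
  have := concave_inc hcc (a := (s:ℝ)) (b := (t:ℝ)) (Nat.cast_nonneg s) (by exact_mod_cast h)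
  simpa [lCoef] using this

lemma lCoef_pos (hγ2 : γ < 1) (s : ℕ) : 0 < lCoef γ s := by
  have := Real.rpow_lt_rpow (Nat.cast_nonneg s) (lt_add_one (s:ℝ)) (by linarith : 0 < 1 - γ)
  simp only [lCoef]
  linarith

lemma lCoef_zero_eq (hγ1 : 0 < γ) (hγ2 : γ < 1) : lCoef γ 0 = 1 := by
  have h0 : ((0:ℝ)) ^ (1-γ) = 0 := Real.zero_rpow (by intro h; linarith)
  norm_num [lCoef, h0, Real.one_rpow]

lemma lCoef_ge (hγ1 : 0 < γ) (hγ2 : γ < 1) {k : ℕ} (hk : 1 ≤ k) :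
    1 - γ ≤ (k:ℝ) ^ γ * lCoef γ (k-1) := by
  have hk1 : (1:ℝ) ≤ (k:ℝ) := by exact_mod_cast hk
  have hkpos : (0:ℝ) < (k:ℝ) := by linarith
  have hc : ((k-1:ℕ):ℝ) = (k:ℝ) - 1 := by
    rw [Nat.cast_sub hk]; norm_num
  have hl : lCoef γ (k-1) = (k:ℝ) ^ (1-γ) - ((k:ℝ) - 1) ^ (1-γ) := by
    rw [lCoef, hc]; norm_num
  have hamgm : (k:ℝ) ^ γ * ((k:ℝ) - 1) ^ (1-γ) ≤ γ * (k:ℝ) + (1-γ) * ((k:ℝ) - 1) :=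
    Real.geom_mean_le_arith_mean2_weighted hγ1.le (by linarith) hkpos.le (by linarith)
      (by ring)
  have hprod : (k:ℝ) ^ γ * (k:ℝ) ^ (1-γ) = (k:ℝ) := by
    rw [← Real.rpow_add hkpos, show γ + (1-γ) = 1 by ring, Real.rpow_one]
  rw [hl, mul_sub, hprod]
  linarith

end FracAux

set_option maxHeartbeats 1000000 in
/-- Theorem 4.3 (case `0 < γ < 1`): convergence of the two-dimensional implicit scheme.
Here `ε k i j` is the error `u(x_i,y_j,t_k) - u^k_{i,j}` and `R k i j` the local
truncation error, with `Rmax` the maximum of `|R^k_{i,j}|`. -/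
theorem implicit_2d_convergence (γ α β : ℝ) (hγ : γ ∈ Set.Ioo (0:ℝ) 1)
    (hα : α ∈ Set.Ioc (1:ℝ) 2) (hβ : β ∈ Set.Ioc (1:ℝ) 2)
    (Nx Ny Nt : ℕ) (hNx : 2 ≤ Nx) (hNy : 2 ≤ Ny) (hNt : 1 ≤ Nt)
    (τ Δx Δy : ℝ) (hτ : 0 < τ) (hΔx : 0 < Δx) (hΔy : 0 < Δy)
    (c d : ℕ → ℕ → ℕ → ℝ)
    (hcd : ∀ i j k : ℕ, 1 ≤ i → i ≤ Nx - 1 → 1 ≤ j → j ≤ Ny - 1 → 1 ≤ k → k ≤ Nt →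
      0 ≤ c i j k ∧ 0 ≤ d i j k)
    (ω' ω'' : ℕ → ℕ → ℕ → ℝ)
    (hω : ∀ i j k : ℕ, 1 ≤ i → i ≤ Nx - 1 → 1 ≤ j → j ≤ Ny - 1 → 1 ≤ k → k ≤ Nt →
      ω' i j k = -(Real.Gamma (2 - γ) * τ ^ γ * kappa α * c i j k)
          / (Real.Gamma (4 - α) * Δx ^ α) ∧
      ω'' i j k = -(Real.Gamma (2 - γ) * τ ^ γ * kappa β * d i j k)
          / (Real.Gamma (4 - β) * Δy ^ β))
    (R : ℕ → ℕ → ℕ → ℝ) (Rmax : ℝ)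
    (hRmax : IsGreatest
      {x : ℝ | ∃ i j k : ℕ, 1 ≤ i ∧ i ≤ Nx - 1 ∧ 1 ≤ j ∧ j ≤ Ny - 1 ∧ 1 ≤ k ∧ k ≤ Nt ∧
        x = |R k i j|} Rmax)
    (ε : ℕ → ℕ → ℕ → ℝ)
    (hinit : ∀ i j : ℕ, i ≤ Nx → j ≤ Ny → ε 0 i j = 0)
    (hbc : ∀ k i j : ℕ, 1 ≤ k → k ≤ Nt → i ≤ Nx → j ≤ Ny →
      (i = 0 ∨ i = Nx ∨ j = 0 ∨ j = Ny) → ε k i j = 0)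
    (hscheme : ∀ i j k : ℕ, 1 ≤ i → i ≤ Nx - 1 → 1 ≤ j → j ≤ Ny - 1 → k + 1 ≤ Nt →
      (1 - ω' i j (k + 1) * gCoef α Nx i i - ω'' i j (k + 1) * gCoef β Ny j j)
          * ε (k + 1) i j
        - ω' i j (k + 1)
          * ∑ m ∈ (Finset.range (Nx + 1)).erase i, gCoef α Nx i m * ε (k + 1) m j
        - ω'' i j (k + 1)
          * ∑ m ∈ (Finset.range (Ny + 1)).erase j, gCoef β Ny j m * ε (k + 1) i m
      = (∑ s ∈ Finset.range k, (lCoef γ s - lCoef γ (s + 1)) * ε (k - s) i j)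
        + R (k + 1) i j) :
    (∀ k : ℕ, 1 ≤ k → k ≤ Nt →
      maxAbs2 Nx Ny (ε k) ≤ Rmax / lCoef γ (k - 1) ∧
      Rmax / lCoef γ (k - 1) ≤ (k : ℝ) ^ γ / (1 - γ) * Rmax) ∧
    (∀ T C : ℝ, 0 < T → (Nt : ℝ) * τ ≤ T → 0 < C →
      (∀ i j k : ℕ, 1 ≤ i → i ≤ Nx - 1 → 1 ≤ j → j ≤ Ny - 1 → 1 ≤ k → k ≤ Nt →
        |R k i j| ≤ C * τ ^ γ * (τ ^ (2 - γ) + Δx ^ 2 + Δy ^ 2)) →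
      ∀ k : ℕ, k ≤ Nt →
        maxAbs2 Nx Ny (ε k) ≤ C * T ^ γ / (1 - γ) * (τ ^ (2 - γ) + Δx ^ 2 + Δy ^ 2)) := by
  obtain ⟨hγ1, hγ2⟩ := hγ
  obtain ⟨hα1, hα2⟩ := hα
  obtain ⟨hβ1, hβ2⟩ := hβ
  have h1γ : 0 < 1 - γ := by linarith
  have hRm0 : 0 ≤ Rmax := by
    obtain ⟨⟨i, j, k, -, -, -, -, -, -, hre⟩, -⟩ := hRmax
    rw [hre]; exact abs_nonneg _
  have hEle : ∀ (k i j : ℕ), i ≤ Nx → j ≤ Ny → |ε k i j| ≤ maxAbs2 Nx Ny (ε k) := by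
    intro k i j hi hj
    exact Finset.le_sup' (f := fun p : ℕ × ℕ => |ε k p.1 p.2|)
      (b := (i, j)) (by simp only [Finset.mem_product, Finset.mem_range]; omega)
  have hE0 : ∀ k : ℕ, 0 ≤ maxAbs2 Nx Ny (ε k) := fun k =>
    le_trans (abs_nonneg _) (hEle k 0 0 (Nat.zero_le _) (Nat.zero_le _))
  have homega : ∀ i j k : ℕ, 1 ≤ i → i ≤ Nx - 1 → 1 ≤ j → j ≤ Ny - 1 → 1 ≤ k → k ≤ Nt →
      0 ≤ ω' i j k ∧ 0 ≤ ω'' i j k := by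
    intro i j k h1 h2 h3 h4 h5 h6
    obtain ⟨hc, hd⟩ := hcd i j k h1 h2 h3 h4 h5 h6
    obtain ⟨hw1, hw2⟩ := hω i j k h1 h2 h3 h4 h5 h6
    have hΓγ : 0 < Real.Gamma (2 - γ) := Real.Gamma_pos_of_pos (by linarith)
    have hτγ : 0 < τ ^ γ := Real.rpow_pos_of_pos hτ γ
    have hπ := Real.pi_pos
    have hkα : kappa α < 0 := by
      have hcos : Real.cos (α * Real.pi / 2) < 0 :=
        Real.cos_neg_of_pi_div_two_lt_of_lt (by nlinarith) (by nlinarith)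
      rw [kappa]
      exact div_neg_of_pos_of_neg one_pos (by linarith)
    have hkβ : kappa β < 0 := by
      have hcos : Real.cos (β * Real.pi / 2) < 0 :=
        Real.cos_neg_of_pi_div_two_lt_of_lt (by nlinarith) (by nlinarith)
      rw [kappa]
      exact div_neg_of_pos_of_neg one_pos (by linarith)
    constructor
    · rw [hw1]
      apply div_nonneg
      · have hre : -(Real.Gamma (2-γ) * τ^γ * kappa α * c i j k)
            = Real.Gamma (2-γ) * τ^γ * (-kappa α) * c i j k := by ring
        rw [hre]
        exact mul_nonneg (mul_nonneg (mul_pos hΓγ hτγ).le (by linarith)) hc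
      · exact mul_nonneg (Real.Gamma_pos_of_pos (by linarith : (0:ℝ) < 4 - α)).le
          (Real.rpow_pos_of_pos hΔx α).le
    · rw [hw2]
      apply div_nonneg
      · have hre : -(Real.Gamma (2-γ) * τ^γ * kappa β * d i j k)
            = Real.Gamma (2-γ) * τ^γ * (-kappa β) * d i j k := by ring
        rw [hre]
        exact mul_nonneg (mul_nonneg (mul_pos hΓγ hτγ).le (by linarith)) hd
      · exact mul_nonneg (Real.Gamma_pos_of_pos (by linarith : (0:ℝ) < 4 - β)).le
          (Real.rpow_pos_of_pos hΔy β).le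
  -- the maximum-principle step
  have hstep : ∀ k : ℕ, k + 1 ≤ Nt →
      maxAbs2 Nx Ny (ε (k+1)) ≤
        (∑ s ∈ Finset.range k, (lCoef γ s - lCoef γ (s+1)) * maxAbs2 Nx Ny (ε (k-s)))
          + Rmax := by
    intro k hkNt
    have hRHS0 : 0 ≤ (∑ s ∈ Finset.range k,
        (lCoef γ s - lCoef γ (s+1)) * maxAbs2 Nx Ny (ε (k-s))) + Rmax := by
      apply add_nonneg _ hRm0
      apply Finset.sum_nonneg
      intro s _
      exact mul_nonneg (sub_nonneg.2 (FracAux.lCoef_anti hγ1.le hγ2.le (Nat.le_succ s))) (hE0 _)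
    obtain ⟨b, hbmem, hbeq⟩ := Finset.exists_mem_eq_sup'
      (Finset.nonempty_range_add_one.product Finset.nonempty_range_add_one)
      (fun p : ℕ × ℕ => |ε (k+1) p.1 p.2|)
    have hEeq : maxAbs2 Nx Ny (ε (k+1)) = |ε (k+1) b.1 b.2| := hbeq
    rw [Finset.mem_product, Finset.mem_range, Finset.mem_range] at hbmem
    obtain ⟨hb1, hb2⟩ := hbmem
    by_cases hbd : b.1 = 0 ∨ b.1 = Nx ∨ b.2 = 0 ∨ b.2 = Ny
    · rw [hEeq, hbc (k+1) b.1 b.2 (by omega) hkNt (by omega) (by omega) hbd, abs_zero]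
      exact hRHS0
    · push_neg at hbd
      obtain ⟨hne1, hne2, hne3, hne4⟩ := hbd
      have hi1 : 1 ≤ b.1 := by omega
      have hi2 : b.1 ≤ Nx - 1 := by omega
      have hj1 : 1 ≤ b.2 := by omega
      have hj2 : b.2 ≤ Ny - 1 := by omega
      have hsch := hscheme b.1 b.2 k hi1 hi2 hj1 hj2 hkNt
      obtain ⟨hw1n, hw2n⟩ := homega b.1 b.2 (k+1) hi1 hi2 hj1 hj2 (by omega) hkNt
      have hS1 : |∑ m ∈ (Finset.range (Nx + 1)).erase b.1, gCoef α Nx b.1 m * ε (k+1) m b.2|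
          ≤ -gCoef α Nx b.1 b.1 * maxAbs2 Nx Ny (ε (k+1)) := by
        have hsub : (Finset.Icc 1 (Nx-1)).erase b.1 ⊆ (Finset.range (Nx+1)).erase b.1 := by
          intro m hm
          simp only [Finset.mem_erase, Finset.mem_Icc, Finset.mem_range] at hm ⊢
          omega
        have hzero : ∀ m ∈ (Finset.range (Nx+1)).erase b.1,
            m ∉ (Finset.Icc 1 (Nx-1)).erase b.1 → gCoef α Nx b.1 m * ε (k+1) m b.2 = 0 := by
          intro m hm hnm
          simp only [Finset.mem_erase, Finset.mem_Icc, Finset.mem_range] at hm hnm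
          have hor : m = 0 ∨ m = Nx := by omega
          have hz : ε (k+1) m b.2 = 0 := by
            apply hbc (k+1) m b.2 (by omega) hkNt (by omega) (by omega)
            rcases hor with h | h
            · exact Or.inl h
            · exact Or.inr (Or.inl h)
          rw [hz, mul_zero]
        rw [← Finset.sum_subset hsub hzero]
        calc |∑ m ∈ (Finset.Icc 1 (Nx-1)).erase b.1, gCoef α Nx b.1 m * ε (k+1) m b.2|
            ≤ ∑ m ∈ (Finset.Icc 1 (Nx-1)).erase b.1, |gCoef α Nx b.1 m * ε (k+1) m b.2| :=
              Finset.abs_sum_le_sum_abs _ _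
        _ ≤ ∑ m ∈ (Finset.Icc 1 (Nx-1)).erase b.1,
              gCoef α Nx b.1 m * maxAbs2 Nx Ny (ε (k+1)) := by
              apply Finset.sum_le_sum
              intro m hm
              simp only [Finset.mem_erase, Finset.mem_Icc] at hm
              have hg0 : 0 ≤ gCoef α Nx b.1 m :=
                FracAux.gCoef_offdiag_nonneg hα1.le hα2 hi1 hi2 hNx hm.2.1 hm.2.2 hm.1
              rw [abs_mul, abs_of_nonneg hg0]
              exact mul_le_mul_of_nonneg_left (hEle _ _ _ (by omega) (by omega)) hg0
        _ = (∑ m ∈ (Finset.Icc 1 (Nx-1)).erase b.1, gCoef α Nx b.1 m)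
              * maxAbs2 Nx Ny (ε (k+1)) := by rw [Finset.sum_mul]
        _ ≤ -gCoef α Nx b.1 b.1 * maxAbs2 Nx Ny (ε (k+1)) :=
              mul_le_mul_of_nonneg_right
                (FracAux.gCoef_erase_sum_le hα1.le hα2 hi1 hi2 hNx) (hE0 _)
      have hS2 : |∑ m ∈ (Finset.range (Ny + 1)).erase b.2, gCoef β Ny b.2 m * ε (k+1) b.1 m|
          ≤ -gCoef β Ny b.2 b.2 * maxAbs2 Nx Ny (ε (k+1)) := by
        have hsub : (Finset.Icc 1 (Ny-1)).erase b.2 ⊆ (Finset.range (Ny+1)).erase b.2 := by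
          intro m hm
          simp only [Finset.mem_erase, Finset.mem_Icc, Finset.mem_range] at hm ⊢
          omega
        have hzero : ∀ m ∈ (Finset.range (Ny+1)).erase b.2,
            m ∉ (Finset.Icc 1 (Ny-1)).erase b.2 → gCoef β Ny b.2 m * ε (k+1) b.1 m = 0 := by
          intro m hm hnm
          simp only [Finset.mem_erase, Finset.mem_Icc, Finset.mem_range] at hm hnm
          have hor : m = 0 ∨ m = Ny := by omega
          have hz : ε (k+1) b.1 m = 0 := by
            apply hbc (k+1) b.1 m (by omega) hkNt (by omega) (by omega)
            rcases hor with h | h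
            · exact Or.inr (Or.inr (Or.inl h))
            · exact Or.inr (Or.inr (Or.inr h))
          rw [hz, mul_zero]
        rw [← Finset.sum_subset hsub hzero]
        calc |∑ m ∈ (Finset.Icc 1 (Ny-1)).erase b.2, gCoef β Ny b.2 m * ε (k+1) b.1 m|
            ≤ ∑ m ∈ (Finset.Icc 1 (Ny-1)).erase b.2, |gCoef β Ny b.2 m * ε (k+1) b.1 m| :=
              Finset.abs_sum_le_sum_abs _ _
        _ ≤ ∑ m ∈ (Finset.Icc 1 (Ny-1)).erase b.2,
              gCoef β Ny b.2 m * maxAbs2 Nx Ny (ε (k+1)) := by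
              apply Finset.sum_le_sum
              intro m hm
              simp only [Finset.mem_erase, Finset.mem_Icc] at hm
              have hg0 : 0 ≤ gCoef β Ny b.2 m :=
                FracAux.gCoef_offdiag_nonneg hβ1.le hβ2 hj1 hj2 hNy hm.2.1 hm.2.2 hm.1
              rw [abs_mul, abs_of_nonneg hg0]
              exact mul_le_mul_of_nonneg_left (hEle _ _ _ (by omega) (by omega)) hg0
        _ = (∑ m ∈ (Finset.Icc 1 (Ny-1)).erase b.2, gCoef β Ny b.2 m)
              * maxAbs2 Nx Ny (ε (k+1)) := by rw [Finset.sum_mul]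
        _ ≤ -gCoef β Ny b.2 b.2 * maxAbs2 Nx Ny (ε (k+1)) :=
              mul_le_mul_of_nonneg_right
                (FracAux.gCoef_erase_sum_le hβ1.le hβ2 hj1 hj2 hNy) (hE0 _)
      have hRb : |(∑ s ∈ Finset.range k, (lCoef γ s - lCoef γ (s+1)) * ε (k-s) b.1 b.2)
            + R (k+1) b.1 b.2|
          ≤ (∑ s ∈ Finset.range k, (lCoef γ s - lCoef γ (s+1)) * maxAbs2 Nx Ny (ε (k-s)))
            + Rmax := by
        have hRle : |R (k+1) b.1 b.2| ≤ Rmax :=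
          hRmax.2 ⟨b.1, b.2, k+1, hi1, hi2, hj1, hj2, by omega, hkNt, rfl⟩
        calc |(∑ s ∈ Finset.range k, (lCoef γ s - lCoef γ (s+1)) * ε (k-s) b.1 b.2)
              + R (k+1) b.1 b.2|
            ≤ |∑ s ∈ Finset.range k, (lCoef γ s - lCoef γ (s+1)) * ε (k-s) b.1 b.2|
              + |R (k+1) b.1 b.2| := abs_add_le _ _
        _ ≤ (∑ s ∈ Finset.range k, (lCoef γ s - lCoef γ (s+1)) * maxAbs2 Nx Ny (ε (k-s)))
              + Rmax := by
            apply add_le_add _ hRle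
            calc |∑ s ∈ Finset.range k, (lCoef γ s - lCoef γ (s+1)) * ε (k-s) b.1 b.2|
                ≤ ∑ s ∈ Finset.range k, |(lCoef γ s - lCoef γ (s+1)) * ε (k-s) b.1 b.2| :=
                  Finset.abs_sum_le_sum_abs _ _
            _ ≤ ∑ s ∈ Finset.range k,
                  (lCoef γ s - lCoef γ (s+1)) * maxAbs2 Nx Ny (ε (k-s)) := by
                apply Finset.sum_le_sum
                intro s _
                have hls : 0 ≤ lCoef γ s - lCoef γ (s+1) :=
                  sub_nonneg.2 (FracAux.lCoef_anti hγ1.le hγ2.le (Nat.le_succ s))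
                rw [abs_mul, abs_of_nonneg hls]
                exact mul_le_mul_of_nonneg_left (hEle _ _ _ (by omega) (by omega)) hls
      have hdx : gCoef α Nx b.1 b.1 ≤ 0 := FracAux.gCoef_diag_nonpos hα1.le hα2 hi1 hi2 hNx
      have hdy : gCoef β Ny b.2 b.2 ≤ 0 := FracAux.gCoef_diag_nonpos hβ1.le hβ2 hj1 hj2 hNy
      have hco : 0 ≤ 1 - ω' b.1 b.2 (k+1) * gCoef α Nx b.1 b.1
          - ω'' b.1 b.2 (k+1) * gCoef β Ny b.2 b.2 := by
        linarith [mul_nonneg hw1n (neg_nonneg.2 hdx), mul_nonneg hw2n (neg_nonneg.2 hdy)]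
      have hchain : (1 - ω' b.1 b.2 (k+1) * gCoef α Nx b.1 b.1
            - ω'' b.1 b.2 (k+1) * gCoef β Ny b.2 b.2) * maxAbs2 Nx Ny (ε (k+1))
          ≤ ((∑ s ∈ Finset.range k, (lCoef γ s - lCoef γ (s+1)) * maxAbs2 Nx Ny (ε (k-s)))
              + Rmax)
            + ω' b.1 b.2 (k+1) * (-gCoef α Nx b.1 b.1 * maxAbs2 Nx Ny (ε (k+1)))
            + ω'' b.1 b.2 (k+1) * (-gCoef β Ny b.2 b.2 * maxAbs2 Nx Ny (ε (k+1))) := by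
        have heq1 : (1 - ω' b.1 b.2 (k+1) * gCoef α Nx b.1 b.1
              - ω'' b.1 b.2 (k+1) * gCoef β Ny b.2 b.2) * ε (k+1) b.1 b.2
            = ((∑ s ∈ Finset.range k, (lCoef γ s - lCoef γ (s+1)) * ε (k-s) b.1 b.2)
                + R (k+1) b.1 b.2)
              + ω' b.1 b.2 (k+1)
                * (∑ m ∈ (Finset.range (Nx + 1)).erase b.1, gCoef α Nx b.1 m * ε (k+1) m b.2)
              + ω'' b.1 b.2 (k+1)
                * (∑ m ∈ (Finset.range (Ny + 1)).erase b.2, gCoef β Ny b.2 m * ε (k+1) b.1 m) := by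
          linarith [hsch]
        calc (1 - ω' b.1 b.2 (k+1) * gCoef α Nx b.1 b.1
              - ω'' b.1 b.2 (k+1) * gCoef β Ny b.2 b.2) * maxAbs2 Nx Ny (ε (k+1))
            = |(1 - ω' b.1 b.2 (k+1) * gCoef α Nx b.1 b.1
                - ω'' b.1 b.2 (k+1) * gCoef β Ny b.2 b.2) * ε (k+1) b.1 b.2| := by
              rw [abs_mul, abs_of_nonneg hco, hEeq]
        _ = |((∑ s ∈ Finset.range k, (lCoef γ s - lCoef γ (s+1)) * ε (k-s) b.1 b.2)
                + R (k+1) b.1 b.2)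
              + ω' b.1 b.2 (k+1)
                * (∑ m ∈ (Finset.range (Nx + 1)).erase b.1, gCoef α Nx b.1 m * ε (k+1) m b.2)
              + ω'' b.1 b.2 (k+1)
                * (∑ m ∈ (Finset.range (Ny + 1)).erase b.2, gCoef β Ny b.2 m * ε (k+1) b.1 m)| := by
              rw [heq1]
        _ ≤ |(∑ s ∈ Finset.range k, (lCoef γ s - lCoef γ (s+1)) * ε (k-s) b.1 b.2)
                + R (k+1) b.1 b.2|
              + ω' b.1 b.2 (k+1)
                * |∑ m ∈ (Finset.range (Nx + 1)).erase b.1, gCoef α Nx b.1 m * ε (k+1) m b.2|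
              + ω'' b.1 b.2 (k+1)
                * |∑ m ∈ (Finset.range (Ny + 1)).erase b.2, gCoef β Ny b.2 m * ε (k+1) b.1 m| := by
              have t1 := abs_add_le ((∑ s ∈ Finset.range k,
                  (lCoef γ s - lCoef γ (s+1)) * ε (k-s) b.1 b.2) + R (k+1) b.1 b.2
                + ω' b.1 b.2 (k+1)
                  * (∑ m ∈ (Finset.range (Nx + 1)).erase b.1, gCoef α Nx b.1 m * ε (k+1) m b.2))
                (ω'' b.1 b.2 (k+1)
                  * (∑ m ∈ (Finset.range (Ny + 1)).erase b.2, gCoef β Ny b.2 m * ε (k+1) b.1 m))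
              have t2 := abs_add_le ((∑ s ∈ Finset.range k,
                  (lCoef γ s - lCoef γ (s+1)) * ε (k-s) b.1 b.2) + R (k+1) b.1 b.2)
                (ω' b.1 b.2 (k+1)
                  * (∑ m ∈ (Finset.range (Nx + 1)).erase b.1, gCoef α Nx b.1 m * ε (k+1) m b.2))
              rw [abs_mul, abs_of_nonneg hw1n] at t2
              rw [abs_mul, abs_of_nonneg hw2n] at t1
              linarith
        _ ≤ ((∑ s ∈ Finset.range k, (lCoef γ s - lCoef γ (s+1)) * maxAbs2 Nx Ny (ε (k-s)))
                + Rmax)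
              + ω' b.1 b.2 (k+1) * (-gCoef α Nx b.1 b.1 * maxAbs2 Nx Ny (ε (k+1)))
              + ω'' b.1 b.2 (k+1) * (-gCoef β Ny b.2 b.2 * maxAbs2 Nx Ny (ε (k+1))) := by
              apply add_le_add (add_le_add hRb (mul_le_mul_of_nonneg_left hS1 hw1n))
                (mul_le_mul_of_nonneg_left hS2 hw2n)
      linarith [hchain]
  -- the induction
  have hconv : ∀ k : ℕ, k + 1 ≤ Nt → maxAbs2 Nx Ny (ε (k+1)) ≤ Rmax / lCoef γ k := by
    intro k
    induction k using Nat.strong_induction_on with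
    | _ k ih =>
      intro hkNt
      have hst := hstep k hkNt
      have hlk : 0 < lCoef γ k := FracAux.lCoef_pos hγ2 k
      have hterm : ∀ s ∈ Finset.range k,
          (lCoef γ s - lCoef γ (s+1)) * maxAbs2 Nx Ny (ε (k-s))
            ≤ (lCoef γ s - lCoef γ (s+1)) * (Rmax / lCoef γ k) := by
        intro s hs
        rw [Finset.mem_range] at hs
        have hks : k - s = (k - s - 1) + 1 := by omega
        have hEb := ih (k - s - 1) (by omega) (by omega : (k - s - 1) + 1 ≤ Nt)
        rw [← hks] at hEb
        have hmono : lCoef γ k ≤ lCoef γ (k - s - 1) :=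
          FracAux.lCoef_anti hγ1.le hγ2.le (by omega)
        have hdiv : Rmax / lCoef γ (k - s - 1) ≤ Rmax / lCoef γ k :=
          div_le_div_of_nonneg_left hRm0 hlk hmono
        exact mul_le_mul_of_nonneg_left (hEb.trans hdiv)
          (sub_nonneg.2 (FracAux.lCoef_anti hγ1.le hγ2.le (Nat.le_succ s)))
      have hsum := Finset.sum_le_sum hterm
      have htel : ∑ s ∈ Finset.range k, (lCoef γ s - lCoef γ (s+1)) * (Rmax / lCoef γ k)
          = (lCoef γ 0 - lCoef γ k) * (Rmax / lCoef γ k) := by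
        rw [← Finset.sum_mul, Finset.sum_range_sub' (fun s => lCoef γ s) k]
      have hl0 : lCoef γ 0 = 1 := FracAux.lCoef_zero_eq hγ1 hγ2
      have hfin : (lCoef γ 0 - lCoef γ k) * (Rmax / lCoef γ k) + Rmax = Rmax / lCoef γ k := by
        rw [hl0]
        field_simp
        ring
      linarith
  have hpart1 : ∀ k : ℕ, 1 ≤ k → k ≤ Nt →
      maxAbs2 Nx Ny (ε k) ≤ Rmax / lCoef γ (k-1) ∧
      Rmax / lCoef γ (k-1) ≤ (k:ℝ)^γ / (1-γ) * Rmax := by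
    intro k hk1 hk2
    obtain ⟨k', rfl⟩ : ∃ k', k = k' + 1 := ⟨k - 1, by omega⟩
    simp only [Nat.add_sub_cancel]
    constructor
    · exact hconv k' hk2
    · have hge := FracAux.lCoef_ge hγ1 hγ2 (k := k'+1) (by omega)
      simp only [Nat.add_sub_cancel] at hge
      have hl : 0 < lCoef γ k' := FracAux.lCoef_pos hγ2 k'
      have hkey : Rmax * (1-γ) ≤ Rmax * (((k'+1:ℕ):ℝ)^γ * lCoef γ k') :=
        mul_le_mul_of_nonneg_left hge hRm0
      rw [div_le_iff₀ hl]
      have hre : ((k'+1:ℕ):ℝ)^γ / (1-γ) * Rmax * lCoef γ k'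
          = (Rmax * (((k'+1:ℕ):ℝ)^γ * lCoef γ k')) / (1-γ) := by ring
      rw [hre, le_div_iff₀ h1γ]
      linarith
  refine ⟨hpart1, ?_⟩
  intro T C hT hNtτ hC hRb k hkNt
  have hX0 : 0 ≤ τ^(2-γ) + Δx^2 + Δy^2 :=
    add_nonneg (add_nonneg (Real.rpow_nonneg hτ.le _) (sq_nonneg _)) (sq_nonneg _)
  have hTγ : 0 ≤ T^γ := Real.rpow_nonneg hT.le γ
  by_cases hk0 : k = 0
  · subst hk0
    have hgoal0 : 0 ≤ C * T^γ / (1-γ) * (τ^(2-γ) + Δx^2 + Δy^2) :=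
      mul_nonneg (div_nonneg (mul_nonneg hC.le hTγ) h1γ.le) hX0
    apply Finset.sup'_le
    intro p hp
    rw [Finset.mem_product, Finset.mem_range, Finset.mem_range] at hp
    rw [hinit p.1 p.2 (by omega) (by omega), abs_zero]
    exact hgoal0
  · have hk1 : 1 ≤ k := by omega
    obtain ⟨hEk, hRk⟩ := hpart1 k hk1 hkNt
    have hRmle : Rmax ≤ C * τ^γ * (τ^(2-γ) + Δx^2 + Δy^2) := by
      obtain ⟨⟨i, j, k', c1, c2, c3, c4, c5, c6, hre⟩, -⟩ := hRmax
      rw [hre]; exact hRb i j k' c1 c2 c3 c4 c5 c6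
    have hkγ0 : 0 ≤ (k:ℝ)^γ := Real.rpow_nonneg (Nat.cast_nonneg k) γ
    have ht1 : (k:ℝ)^γ/(1-γ) * Rmax ≤ (k:ℝ)^γ/(1-γ) * (C * τ^γ * (τ^(2-γ)+Δx^2+Δy^2)) :=
      mul_le_mul_of_nonneg_left hRmle (div_nonneg hkγ0 h1γ.le)
    have hkτ : (k:ℝ)^γ * τ^γ ≤ T^γ := by
      rw [← Real.mul_rpow (Nat.cast_nonneg k) hτ.le]
      apply Real.rpow_le_rpow (by positivity) _ hγ1.le
      calc (k:ℝ) * τ ≤ (Nt:ℝ) * τ := by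
            apply mul_le_mul_of_nonneg_right _ hτ.le
            exact_mod_cast hkNt
      _ ≤ T := hNtτ
    have ht2 : (k:ℝ)^γ/(1-γ) * (C * τ^γ * (τ^(2-γ)+Δx^2+Δy^2))
        = C * ((k:ℝ)^γ * τ^γ) / (1-γ) * (τ^(2-γ)+Δx^2+Δy^2) := by ring
    have ht3 : C * ((k:ℝ)^γ * τ^γ) / (1-γ) * (τ^(2-γ)+Δx^2+Δy^2)
        ≤ C * T^γ / (1-γ) * (τ^(2-γ)+Δx^2+Δy^2) := by
      apply mul_le_mul_of_nonneg_right _ hX0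
      exact (div_le_div_iff_of_pos_right h1γ).2 (mul_le_mul_of_nonneg_left hkτ hC.le)
    linarith
end

section
/- (Theorem 4.4: conditional convergence of the two-dimensional explicit scheme, 0 < γ < 1.) Let γ ∈ (0,1), α, β ∈ (1,2], integers N_x, N_y ≥ 2 and N_t ≥ 1, reals τ, Δx, Δy > 0, and nonnegative reals c_{i,j,k}, d_{i,j,k} (1 ≤ i ≤ N_x-1, 1 ≤ j ≤ N_y-1, 0 ≤ k ≤ N_t - 1). Let C_max be a real with (-κ_α)·(4-2^{3-α})·c_{i,j,k}/Γ(4-α) ≤ C_max and (-κ_β)·(4-2^{3-β})·d_{i,j,k}/Γ(4-β) ≤ C_max for all i, j, k, and assume Γ(2-γ)·C_max·(τ^γ/(Δx)^α + τ^γ/(Δy)^β) ≤ 1 - 2^{-γ}. Set σ'_{i,j,k} = -Γ(2-γ)·τ^γ·κ_α·c_{i,j,k}/(Γ(4-α)·(Δx)^α) ≥ 0 and σ''_{i,j,k} = -Γ(2-γ)·τ^γ·κ_β·d_{i,j,k}/(Γ(4-β)·(Δy)^β) ≥ 0. Let R^k_{i,j} be reals with R_max = max_{i,j,k} |R^k_{i,j}|.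 Suppose real numbers ε^k_{i,j} satisfy ε^0_{i,j} = 0 for all i, j; ε^k_{i,j} = 0 whenever i ∈ {0, N_x} or j ∈ {0, N_y} and 1 ≤ k ≤ N_t; ε^1_{i,j} = R^1_{i,j} for interior (i,j); and for all interior (i,j) and 1 ≤ k ≤ N_t - 1: ε^{k+1}_{i,j} = (1 - l_1 + σ'_{i,j,k}·g^{α,N_x}_{i,i} + σ''_{i,j,k}·g^{β,N_y}_{j,j})·ε^k_{i,j} + Σ_{s=1}^{k-1}(l_s - l_{s+1})·ε^{k-s}_{i,j} + σ'_{i,j,k}·Σ_{m=0, m≠i}^{N_x} g^{α,N_x}_{i,m}·ε^k_{m,j} + σ''_{i,j,k}·Σ_{m=0, m≠j}^{N_y} g^{β,N_y}_{j,m}·ε^k_{i,m} + R^{k+1}_{i,j}. Then for every 1 ≤ k ≤ N_t: max_{i,j} |ε^k_{i,j}| ≤ R_max / l_{k-1} ≤ (k^γ/(1-γ))·R_max. In particular, if T > 0, N_t·τ ≤ T and |R^k_{i,j}| ≤ C·τ^γ·(τ^{2-γ} + (Δx)^2 + (Δy)^2) for all i, j, k, then max_{i,j} |ε^k_{i,j}|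 ≤ (C·T^γ/(1-γ))·(τ^{2-γ} + (Δx)^2 + (Δy)^2) for all k. -/
section Thm44Aux
open Real Set Finset
set_option maxHeartbeats 1000000

namespace Thm44

noncomputable def wfun (s x : ℝ) : ℝ := (x+1)^s - 2*x^s + (x-1)^s
noncomputable def Bfun (s x : ℝ) : ℝ := (x-1)^s - x^s + s*x^(s-1)
noncomputable def dfun (s x : ℝ) : ℝ := x^s - (x-1)^s

lemma mvt {F F' : ℝ → ℝ} {a b : ℝ} (hab : a < b)
    (hd : ∀ t ∈ Set.Icc a b, HasDerivAt F (F' t) t) :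
    ∃ c ∈ Set.Ioo a b, F b - F a = F' c * (b - a) := by
  obtain ⟨c, hc, h⟩ := exists_hasDerivAt_eq_slope F F' hab
    (fun t ht => (hd t ht).continuousAt.continuousWithinAt)
    (fun t ht => hd t ⟨ht.1.le, ht.2.le⟩)
  exact ⟨c, hc, by rw [h, div_mul_cancel₀ _ (sub_ne_zero.mpr hab.ne')]⟩

lemma mono_of_deriv {F F' : ℝ → ℝ} {a b : ℝ} (hab : a ≤ b)
    (hd : ∀ t ∈ Set.Icc a b, HasDerivAt F (F' t) t)
    (h0 : ∀ t ∈ Set.Ioo a b, 0 ≤ F' t) : F a ≤ F b := by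
  rcases eq_or_lt_of_le hab with rfl | h
  · exact le_refl _
  · obtain ⟨c, hc, he⟩ := mvt h hd
    nlinarith [h0 c hc]

lemma secdiff_nonneg {F F' : ℝ → ℝ} {x : ℝ}
    (hd : ∀ t ∈ Set.Icc (x-1) (x+1), HasDerivAt F (F' t) t)
    (hmono : ∀ u v, x - 1 < u → u ≤ v → v < x + 1 → F' u ≤ F' v) :
    0 ≤ F (x-1) - 2*F x + F (x+1) := by
  obtain ⟨c₁, hc₁, h₁⟩ := mvt (show x - 1 < x by linarith)
    (fun t ht => hd t ⟨ht.1, by linarith [ht.2]⟩)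
  obtain ⟨c₂, hc₂, h₂⟩ := mvt (show x < x + 1 by linarith)
    (fun t ht => hd t ⟨by linarith [ht.1], ht.2⟩)
  have := hmono c₁ c₂ hc₁.1 (by linarith [hc₁.2, hc₂.1]) hc₂.2
  nlinarith

lemma hasDerivAt_shift (s c t : ℝ) (h : t + c ≠ 0 ∨ 1 ≤ s) :
    HasDerivAt (fun y : ℝ => (y + c)^s) (s * (t + c)^(s-1)) t := by
  have h1 : HasDerivAt (fun y : ℝ => y + c) 1 t := (hasDerivAt_id t).add_const c
  have := (Real.hasDerivAt_rpow_const (x := t + c) (p := s) h).comp t h1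
  simpa [Function.comp_def] using this

lemma hasDerivAt_shift_sub (s c t : ℝ) (h : t - c ≠ 0 ∨ 1 ≤ s) :
    HasDerivAt (fun y : ℝ => (y - c)^s) (s * (t - c)^(s-1)) t := by
  have h1 : HasDerivAt (fun y : ℝ => y - c) 1 t := (hasDerivAt_id t).sub_const c
  have := (Real.hasDerivAt_rpow_const (x := t - c) (p := s) h).comp t h1
  simpa [Function.comp_def] using this

/-- convexity-type second difference for exponents `q ≤ 0` -/
lemma core_convex {q t : ℝ} (hq : q ≤ 0) (ht : 1 < t) :
    0 ≤ (t+1)^q - 2*t^q + (t-1)^q := by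
  obtain ⟨c₁, hc₁, h₁⟩ := mvt (show t - 1 < t by linarith)
    (fun u hu => Real.hasDerivAt_rpow_const (p := q) (Or.inl (ne_of_gt (by linarith [hu.1]))))
  obtain ⟨c₂, hc₂, h₂⟩ := mvt (show t < t + 1 by linarith)
    (fun u hu => Real.hasDerivAt_rpow_const (p := q) (Or.inl (ne_of_gt (by linarith [hu.1]))))
  have hc : c₂^(q-1) ≤ c₁^(q-1) :=
    Real.rpow_le_rpow_of_nonpos (by linarith [hc₁.1]) (by linarith [hc₁.2, hc₂.1]) (by linarith)
  have := mul_le_mul_of_nonpos_left hc hq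
  nlinarith

/-- tangent-line estimate for exponents `q ≤ 0` -/
lemma core_tangent {q t : ℝ} (hq : q ≤ 0) (ht : 1 < t) :
    0 ≤ (t-1)^q - t^q + q*t^(q-1) := by
  obtain ⟨c, hc, h⟩ := mvt (show t - 1 < t by linarith)
    (fun u hu => Real.hasDerivAt_rpow_const (p := q) (Or.inl (ne_of_gt (by linarith [hu.1]))))
  have hc' : t^(q-1) ≤ c^(q-1) :=
    Real.rpow_le_rpow_of_nonpos (by linarith [hc.1]) (by linarith [hc.2]) (by linarith)
  have := mul_le_mul_of_nonpos_left hc' hq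
  nlinarith

/-- concavity-type second difference for exponents `0 ≤ u ≤ 1` -/
lemma core_concave {u t : ℝ} (hu0 : 0 ≤ u) (hu1 : u ≤ 1) (ht : 1 < t) :
    (t+1)^u - 2*t^u + (t-1)^u ≤ 0 := by
  obtain ⟨c₁, hc₁, h₁⟩ := mvt (show t - 1 < t by linarith)
    (fun v hv => Real.hasDerivAt_rpow_const (p := u) (Or.inl (ne_of_gt (by linarith [hv.1]))))
  obtain ⟨c₂, hc₂, h₂⟩ := mvt (show t < t + 1 by linarith)
    (fun v hv => Real.hasDerivAt_rpow_const (p := u) (Or.inl (ne_of_gt (by linarith [hv.1]))))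
  have hc : c₂^(u-1) ≤ c₁^(u-1) :=
    Real.rpow_le_rpow_of_nonpos (by linarith [hc₁.1]) (by linarith [hc₁.2, hc₂.1]) (by linarith)
  have := mul_le_mul_of_nonneg_left hc hu0
  nlinarith


lemma wfun_hasDeriv {s : ℝ} (hs : 1 ≤ s) (t : ℝ) :
    HasDerivAt (wfun s) (s*(t+1)^(s-1) - 2*(s*t^(s-1)) + s*(t-1)^(s-1)) t := by
  have h1 := hasDerivAt_shift s 1 t (Or.inr hs)
  have h2 : HasDerivAt (fun y : ℝ => 2*y^s) (2*(s*t^(s-1))) t :=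
    (Real.hasDerivAt_rpow_const (p := s) (Or.inr hs)).const_mul 2
  have h3 := hasDerivAt_shift_sub s 1 t (Or.inr hs)
  exact (h1.sub h2).add h3

lemma wfun1_hasDeriv {s t : ℝ} (ht : 1 < t) :
    HasDerivAt (fun y : ℝ => s*(y+1)^(s-1) - 2*(s*y^(s-1)) + s*(y-1)^(s-1))
      (s*((s-1)*(t+1)^(s-1-1)) - 2*(s*((s-1)*t^(s-1-1))) + s*((s-1)*(t-1)^(s-1-1))) t := by
  have h1 := (hasDerivAt_shift (s-1) 1 t (Or.inl (by linarith))).const_mul s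
  have h2 := ((Real.hasDerivAt_rpow_const (p := s-1) (x := t)
      (Or.inl (by positivity))).const_mul s).const_mul 2
  have h3 := (hasDerivAt_shift_sub (s-1) 1 t (Or.inl (by intro h; linarith [sub_eq_zero.mp h]))).const_mul s
  exact (h1.sub h2).add h3

lemma wfun_secdiff {s x : ℝ} (hs1 : 1 ≤ s) (hs2 : s ≤ 2) (hx : 2 ≤ x) :
    0 ≤ wfun s (x-1) - 2 * wfun s x + wfun s (x+1) := by
  apply secdiff_nonneg (F' := fun t => s*(t+1)^(s-1) - 2*(s*t^(s-1)) + s*(t-1)^(s-1))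
  · exact fun t _ => wfun_hasDeriv hs1 t
  · intro u v hu huv hv
    apply mono_of_deriv (F' := fun t =>
        s*((s-1)*(t+1)^(s-1-1)) - 2*(s*((s-1)*t^(s-1-1))) + s*((s-1)*(t-1)^(s-1-1))) huv
    · exact fun t htv => wfun1_hasDeriv (by linarith [htv.1])
    · intro t htv
      have h1 : (1:ℝ) < t := by linarith [htv.1]
      have hcore := core_convex (q := s-2) (by linarith) h1
      have hfac : 0 ≤ s*(s-1) := by nlinarith
      calc (0:ℝ) ≤ (s*(s-1)) * ((t+1)^(s-2) - 2*t^(s-2) + (t-1)^(s-2)) :=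
            mul_nonneg hfac hcore
        _ = s*((s-1)*(t+1)^(s-1-1)) - 2*(s*((s-1)*t^(s-1-1))) + s*((s-1)*(t-1)^(s-1-1)) := by
            rw [show s-1-1 = s-2 by ring]; ring

lemma Bfun_hasDeriv {s : ℝ} (hs : 1 ≤ s) {t : ℝ} (ht : 0 < t) :
    HasDerivAt (Bfun s) (s*(t-1)^(s-1) - s*t^(s-1) + s*((s-1)*t^(s-1-1))) t := by
  have h1 := hasDerivAt_shift_sub s 1 t (Or.inr hs)
  have h2 := Real.hasDerivAt_rpow_const (p := s) (x := t) (Or.inr hs)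
  have h3 := (Real.hasDerivAt_rpow_const (p := s-1) (x := t) (Or.inl ht.ne')).const_mul s
  exact (h1.sub h2).add h3

lemma Bfun1_hasDeriv {s t : ℝ} (ht : 1 < t) :
    HasDerivAt (fun y : ℝ => s*(y-1)^(s-1) - s*y^(s-1) + s*((s-1)*y^(s-1-1)))
      (s*((s-1)*(t-1)^(s-1-1)) - s*((s-1)*t^(s-1-1)) + s*((s-1)*((s-1-1)*t^(s-1-1-1)))) t := by
  have h1 := (hasDerivAt_shift_sub (s-1) 1 t (Or.inl (by intro h; linarith [sub_eq_zero.mp h]))).const_mul s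
  have h2 := ((Real.hasDerivAt_rpow_const (p := s-1) (x := t) (Or.inl (by positivity))).const_mul s)
  have h3 := (((Real.hasDerivAt_rpow_const (p := s-1-1) (x := t)
      (Or.inl (by positivity))).const_mul (s-1)).const_mul s)
  exact (h1.sub h2).add h3

lemma Bfun_secdiff {s x : ℝ} (hs1 : 1 ≤ s) (hs2 : s ≤ 2) (hx : 2 ≤ x) :
    0 ≤ Bfun s (x-1) - 2 * Bfun s x + Bfun s (x+1) := by
  apply secdiff_nonneg (F' := fun t => s*(t-1)^(s-1) - s*t^(s-1) + s*((s-1)*t^(s-1-1)))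
  · exact fun t htv => Bfun_hasDeriv hs1 (by linarith [htv.1])
  · intro u v hu huv hv
    apply mono_of_deriv (F' := fun t =>
      s*((s-1)*(t-1)^(s-1-1)) - s*((s-1)*t^(s-1-1)) + s*((s-1)*((s-1-1)*t^(s-1-1-1)))) huv
    · exact fun t htv => Bfun1_hasDeriv (by linarith [htv.1])
    · intro t htv
      have h1 : (1:ℝ) < t := by linarith [htv.1]
      have hcore := core_tangent (q := s-2) (by linarith) h1
      have hfac : 0 ≤ s*(s-1) := by nlinarith
      calc (0:ℝ) ≤ (s*(s-1)) * ((t-1)^(s-2) - t^(s-2) + (s-2)*t^(s-2-1)) :=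
            mul_nonneg hfac hcore
        _ = _ := by rw [show s-1-1 = s-2 by ring]; ring

lemma Sfun_secdiff {s x : ℝ} (hs1 : 1 ≤ s) (hs2 : s ≤ 2) (hx : 2 ≤ x) :
    s*(x-1)^(s-1) - 2*(s*x^(s-1)) + s*(x+1)^(s-1) ≤ 0 := by
  have hcore := core_concave (u := s-1) (by linarith) (by linarith) (by linarith : (1:ℝ) < x)
  nlinarith [hcore, (by linarith : (0:ℝ) ≤ s)]


lemma rpow_two_eq (a : ℝ) (ha : 0 ≤ a) : a ^ (2:ℝ) = a * a := by
  rw [show (2:ℝ) = ((2:ℕ):ℝ) by norm_num, Real.rpow_natCast]; ring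

lemma two_rpow_le_four {s : ℝ} (hs : s ≤ 2) : (2:ℝ)^s ≤ 4 := by
  have := Real.rpow_le_rpow_of_exponent_le (by norm_num : (1:ℝ) ≤ 2) hs
  rwa [rpow_two_eq 2 (by norm_num), show (2:ℝ)*2 = 4 by norm_num] at this

lemma one_le_two_rpow {s : ℝ} (hs : 0 ≤ s) : (1:ℝ) ≤ (2:ℝ)^s := by
  have := Real.rpow_le_rpow_of_exponent_le (by norm_num : (1:ℝ) ≤ 2) hs
  rwa [Real.rpow_zero] at this

lemma two_rpow_le_two {s : ℝ} (hs : s ≤ 1) : (2:ℝ)^s ≤ 2 := by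
  have := Real.rpow_le_rpow_of_exponent_le (by norm_num : (1:ℝ) ≤ 2) hs
  rwa [Real.rpow_one] at this

lemma two_rpow_succ (s : ℝ) : (2:ℝ)^s = 2*(2:ℝ)^(s-1) := by
  rw [show s = (s-1)+1 by ring, Real.rpow_add_one (by norm_num : (2:ℝ) ≠ 0)]
  ring_nf

/-- `φ(s) = (s-2)2^(s-1)+5-2s ≥ 1` -/
lemma phi_ge_one {s : ℝ} (hs1 : 1 ≤ s) (hs2 : s ≤ 2) :
    1 ≤ (s-2)*(2:ℝ)^(s-1) + 5 - 2*s := by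
  have h1 : (1:ℝ) ≤ (2:ℝ)^(s-1) := one_le_two_rpow (by linarith)
  have h2 : (2:ℝ)^(s-1) ≤ 2 := two_rpow_le_two (by linarith)
  nlinarith

lemma log_three_lt : Real.log 3 < 1.21 := by
  rw [Real.log_lt_iff_lt_exp (by norm_num : (0:ℝ) < 3)]
  have h1 := Real.exp_one_gt_d9
  have h2 := Real.add_one_le_exp (0.21:ℝ)
  have h3 : Real.exp 1.21 = Real.exp 1 * Real.exp 0.21 := by
    rw [← Real.exp_add]; norm_num
  nlinarith [Real.exp_pos (0.21:ℝ), Real.exp_pos (1:ℝ)]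

/-- `η(s) = 3^s - 4·2^s + 7 ≥ 0` on `[1,2]` -/
lemma eta_nonneg {s : ℝ} (hs1 : 1 ≤ s) (hs2 : s ≤ 2) :
    0 ≤ (3:ℝ)^s - 4*(2:ℝ)^s + 7 := by
  have key : ∀ σ : ℝ, -((3:ℝ)^σ) + 4*(2:ℝ)^σ - 7 =
      -(Real.exp (σ * Real.log 3)) + 4*Real.exp (σ * Real.log 2) - 7 := by
    intro σ
    rw [Real.rpow_def_of_pos (by norm_num : (0:ℝ) < 3),
        Real.rpow_def_of_pos (by norm_num : (0:ℝ) < 2)]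
    ring_nf
  have hmono : -((3:ℝ)^s) + 4*(2:ℝ)^s - 7 ≤ -((3:ℝ)^(2:ℝ)) + 4*(2:ℝ)^(2:ℝ) - 7 := by
    rw [key, key]
    apply mono_of_deriv (F := fun σ => -(Real.exp (σ * Real.log 3)) + 4*Real.exp (σ * Real.log 2) - 7)
      (F' := fun σ => -(Real.exp (σ * Real.log 3) * Real.log 3)
        + 4*(Real.exp (σ * Real.log 2) * Real.log 2)) hs2
    · intro t _
      have d3 : HasDerivAt (fun σ : ℝ => Real.exp (σ * Real.log 3))
          (Real.exp (t * Real.log 3) * Real.log 3) t := by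
        have := (Real.hasDerivAt_exp (t * Real.log 3)).comp t
          ((hasDerivAt_id t).mul_const (Real.log 3))
        simpa [Function.comp_def] using this
      have d2 : HasDerivAt (fun σ : ℝ => Real.exp (σ * Real.log 2))
          (Real.exp (t * Real.log 2) * Real.log 2) t := by
        have := (Real.hasDerivAt_exp (t * Real.log 2)).comp t
          ((hasDerivAt_id t).mul_const (Real.log 2))
        simpa [Function.comp_def] using this
      exact ((d3.neg).add (d2.const_mul 4)).sub_const 7
    · intro t htv
      have ht1 : 1 ≤ t := le_of_lt (lt_of_le_of_lt hs1 htv.1)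
      have ht2 : t ≤ 2 := le_of_lt htv.2
      -- need : exp(t log 3) * log 3 ≤ 4 * (exp(t log 2) * log 2)
      have e3 : Real.exp (t * Real.log 3) = (3:ℝ)^t := by
        rw [Real.rpow_def_of_pos (by norm_num : (0:ℝ) < 3)]; ring_nf
      have e2 : Real.exp (t * Real.log 2) = (2:ℝ)^t := by
        rw [Real.rpow_def_of_pos (by norm_num : (0:ℝ) < 2)]; ring_nf
      have hsplit : (3:ℝ)^t = (2:ℝ)^t * (3/2:ℝ)^t := by
        rw [← Real.mul_rpow (by norm_num) (by norm_num)]; norm_num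
      have h32 : ((3:ℝ)/2)^t ≤ 9/4 := by
        have := Real.rpow_le_rpow_of_exponent_le (by norm_num : (1:ℝ) ≤ 3/2) ht2
        rwa [rpow_two_eq (3/2) (by norm_num), show (3/2:ℝ)*(3/2) = 9/4 by norm_num] at this
      have hl3 : Real.log 3 < 1.21 := log_three_lt
      have hl3' : 0 ≤ Real.log 3 := Real.log_nonneg (by norm_num)
      have hl2 : 0.6931471803 < Real.log 2 := Real.log_two_gt_d9
      have h2pos : (0:ℝ) < (2:ℝ)^t := Real.rpow_pos_of_pos (by norm_num) t
      have h32pos : (0:ℝ) < ((3:ℝ)/2)^t := Real.rpow_pos_of_pos (by norm_num) t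
      simp only [e3, e2]
      rw [hsplit]
      nlinarith [h2pos, h32pos, mul_le_mul h32 hl3.le hl3' (by norm_num : (0:ℝ) ≤ 9/4)]
  have h32 : (3:ℝ)^(2:ℝ) = 9 := by rw [rpow_two_eq 3 (by norm_num)]; norm_num
  have h22 : (2:ℝ)^(2:ℝ) = 4 := by rw [rpow_two_eq 2 (by norm_num)]; norm_num
  rw [h32, h22] at hmono
  linarith


/-- MVT representation of the L1 coefficients. -/
lemma lCoef_mvt (hγ0 : 0 < γ) (hγ1 : γ < 1) (n : ℕ) :
    ∃ c ∈ Set.Ioo (n:ℝ) ((n:ℝ)+1), lCoef γ n = (1-γ) * c^(-γ) := by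
  obtain ⟨c, hc, h⟩ := exists_hasDerivAt_eq_slope (fun x : ℝ => x^(1-γ))
    (fun x => (1-γ)*x^(-γ)) (by linarith : (n:ℝ) < n+1)
    (fun t ht => (Real.continuousAt_rpow_const t (1-γ) (Or.inr (by linarith))).continuousWithinAt)
    (fun t ht => by
      have h0 : (0:ℝ) < t := lt_of_le_of_lt (Nat.cast_nonneg n) ht.1
      have := Real.hasDerivAt_rpow_const (x := t) (p := 1-γ) (Or.inl h0.ne')
      simpa [show (1-γ)-1 = -γ by ring] using this)
  refine ⟨c, hc, ?_⟩
  rw [lCoef]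
  rw [h]
  field_simp
  ring

lemma lCoef_pos (hγ0 : 0 < γ) (hγ1 : γ < 1) (n : ℕ) : 0 < lCoef γ n := by
  obtain ⟨c, hc, h⟩ := lCoef_mvt hγ0 hγ1 n
  have hcpos : (0:ℝ) < c := lt_of_le_of_lt (Nat.cast_nonneg n) hc.1
  rw [h]
  have := Real.rpow_pos_of_pos hcpos (-γ)
  nlinarith

lemma lCoef_anti (hγ0 : 0 < γ) (hγ1 : γ < 1) {m n : ℕ} (hmn : m ≤ n) :
    lCoef γ n ≤ lCoef γ m := by
  rcases eq_or_lt_of_le hmn with rfl | h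
  · exact le_refl _
  · obtain ⟨c, hc, hce⟩ := lCoef_mvt hγ0 hγ1 m
    obtain ⟨d, hd, hde⟩ := lCoef_mvt hγ0 hγ1 n
    have hcd : c ≤ d := by
      have : (m:ℝ) + 1 ≤ (n:ℝ) := by exact_mod_cast Nat.succ_le_of_lt h
      linarith [hc.2, hd.1]
    have hcpos : (0:ℝ) < c := lt_of_le_of_lt (Nat.cast_nonneg m) hc.1
    have := Real.rpow_le_rpow_of_nonpos hcpos hcd (by linarith : -γ ≤ 0)
    rw [hce, hde]
    nlinarith

lemma lCoef_zero (hγ1 : γ < 1) : lCoef γ 0 = 1 := by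
  rw [lCoef]
  simp [Real.zero_rpow (by linarith : 1-γ ≠ 0)]

lemma lCoef_one (γ : ℝ) : lCoef γ 1 = (2:ℝ)^(1-γ) - 1 := by
  rw [lCoef]; norm_num

/-- `l_{k-1} · k^γ ≥ 1 - γ` -/
lemma lCoef_lower (hγ0 : 0 < γ) (hγ1 : γ < 1) {k : ℕ} (hk : 1 ≤ k) :
    (1-γ) ≤ lCoef γ (k-1) * (k:ℝ)^γ := by
  obtain ⟨c, hc, h⟩ := lCoef_mvt hγ0 hγ1 (k-1)
  have hck : c ≤ (k:ℝ) := by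
    have : ((k-1:ℕ):ℝ) + 1 = (k:ℝ) := by
      rw [Nat.cast_sub hk]; ring
    linarith [hc.2]
  have hcpos : (0:ℝ) < c := lt_of_le_of_lt (Nat.cast_nonneg _) hc.1
  have hkpos : (0:ℝ) < (k:ℝ) := by exact_mod_cast hk
  have h1 : (k:ℝ)^(-γ) ≤ c^(-γ) := Real.rpow_le_rpow_of_nonpos hcpos hck (by linarith)
  have h2 : (k:ℝ)^(-γ) * (k:ℝ)^γ = 1 := by
    rw [← Real.rpow_add hkpos]; simp
  have h3 : (0:ℝ) < (k:ℝ)^γ := Real.rpow_pos_of_pos hkpos γ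
  rw [h]
  calc (1-γ) = (1-γ) * ((k:ℝ)^(-γ) * (k:ℝ)^γ) := by rw [h2]; ring
    _ ≤ (1-γ) * c^(-γ) * (k:ℝ)^γ := by nlinarith [mul_nonneg (mul_nonneg (by linarith : (0:ℝ) ≤ 1-γ) h3.le) (sub_nonneg.mpr h1)]

lemma lCoef_le_one (hγ0 : 0 < γ) (hγ1 : γ < 1) (n : ℕ) : lCoef γ n ≤ 1 := by
  have := lCoef_anti hγ0 hγ1 (Nat.zero_le n)
  rwa [lCoef_zero hγ1] at this

/-- `1 - l_1 = 2(1 - 2^{-γ})` -/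
lemma one_sub_lCoef_one (hγ0 : 0 < γ) (hγ1 : γ < 1) :
    1 - lCoef γ 1 = 2*(1 - (2:ℝ)^(-γ)) := by
  rw [lCoef_one]
  have : (2:ℝ)^(1-γ) = 2 * (2:ℝ)^(-γ) := by
    rw [show (1:ℝ)-γ = -γ+1 by ring, Real.rpow_add_one (by norm_num : (2:ℝ) ≠ 0)]
    ring
  rw [this]; ring


lemma secdiff_arg (F : ℝ → ℝ) {a b c x : ℝ} (ha : a = x-1) (hb : b = x) (hc : c = x+1)
    (h : 0 ≤ F (x-1) - 2*F x + F (x+1)) : 0 ≤ F a - 2*F b + F c := by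
  rw [ha, hb, hc]; exact h

section evals
variable {ν : ℝ}

lemma aCoef_diag (ν : ℝ) (j : ℕ) : aCoef ν j j = 1 := by simp [aCoef]

lemma aCoef_zero {j : ℕ} (hj : 1 ≤ j) : aCoef ν j 0 = Bfun (3-ν) (j:ℝ) := by
  have hjpos : (0:ℝ) < j := by exact_mod_cast hj
  unfold aCoef
  rw [if_neg (by omega : ¬(0 = j)), if_pos rfl]
  unfold Bfun
  have key : (j:ℝ)^(3-ν) = (j:ℝ)^(2-ν) * j := by
    rw [show (3:ℝ)-ν = (2-ν)+1 by ring, Real.rpow_add_one hjpos.ne']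
  rw [show (3:ℝ)-ν-1 = 2-ν by ring, key]
  ring

lemma aCoef_mid {j m : ℕ} (h1 : 1 ≤ m) (h2 : m < j) :
    aCoef ν j m = wfun (3-ν) ((j:ℝ)-(m:ℝ)) := by
  simp only [aCoef, if_neg (by omega : ¬(m = j)), if_neg (by omega : ¬(m = 0)), wfun]

lemma bCoef_diag (ν : ℝ) (N j : ℕ) : bCoef ν N j j = 1 := by simp [bCoef]

lemma bCoef_N {N j : ℕ} (hj : j < N) : bCoef ν N j N = Bfun (3-ν) ((N:ℝ)-(j:ℝ)) := by
  have hpos : (0:ℝ) < (N:ℝ)-(j:ℝ) := by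
    have : (j:ℝ) < N := by exact_mod_cast hj
    linarith
  unfold bCoef
  rw [if_neg (by omega : ¬(N = j)), if_pos rfl]
  unfold Bfun
  have key : ((N:ℝ)-j)^(3-ν) = ((N:ℝ)-j)^(2-ν) * ((N:ℝ)-j) := by
    rw [show (3:ℝ)-ν = (2-ν)+1 by ring, Real.rpow_add_one hpos.ne']
  rw [show (3:ℝ)-ν-1 = 2-ν by ring, key]
  ring

lemma bCoef_mid {N j m : ℕ} (hj : j < m) (hm : m < N) :
    bCoef ν N j m = wfun (3-ν) ((m:ℝ)-(j:ℝ)) := by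
  simp only [bCoef, if_neg (by omega : ¬(m = j)), if_neg (by omega : ¬(m = N)), wfun]

lemma wfun_one {s : ℝ} (hs : s ≠ 0) : wfun s 1 = (2:ℝ)^s - 2 := by
  rw [wfun, show (1:ℝ)+1 = 2 by norm_num, show (1:ℝ)-1 = 0 by norm_num,
    Real.zero_rpow hs, Real.one_rpow]
  ring

lemma wfun_two (s : ℝ) : wfun s 2 = (3:ℝ)^s - 2*(2:ℝ)^s + 1 := by
  rw [wfun, show (2:ℝ)+1 = 3 by norm_num, show (2:ℝ)-1 = 1 by norm_num, Real.one_rpow]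

lemma Bfun_one {s : ℝ} (hs : s ≠ 0) : Bfun s 1 = s - 1 := by
  rw [Bfun, show (1:ℝ)-1 = 0 by norm_num, Real.zero_rpow hs, Real.one_rpow, Real.one_rpow]
  ring

lemma Bfun_two (s : ℝ) : Bfun s 2 = 1 - (2:ℝ)^s + s*(2:ℝ)^(s-1) := by
  rw [Bfun, show (2:ℝ)-1 = 1 by norm_num, Real.one_rpow]


end evals

section gvals
variable {ν : ℝ} {N i : ℕ}

lemma secdiff_arg' (F : ℝ → ℝ) {a b c x : ℝ} (ha : a = x+1) (hb : b = x) (hc : c = x-1)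
    (h : 0 ≤ F (x-1) - 2*F x + F (x+1)) : 0 ≤ F a - 2*F b + F c := by
  rw [ha, hb, hc]; linarith

lemma gCoef_diag (hν1 : 1 < ν) (hν2 : ν ≤ 2) (hN : 2 ≤ N) (hi1 : 1 ≤ i) (hi2 : i ≤ N-1) :
    gCoef ν N i i = 2*(2:ℝ)^(3-ν) - 8 := by
  have hs0 : (3:ℝ)-ν ≠ 0 := by intro h; linarith
  have hiN : i < N := by omega
  have e1 : pCoef ν i i = -2*1 + wfun (3-ν) 1 := by
    unfold pCoef
    rw [if_neg (lt_irrefl i), if_pos rfl, aCoef_diag, aCoef_mid hi1 (by omega)]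
    have : ((i+1:ℕ):ℝ) - (i:ℕ) = 1 := by push_cast; ring
    rw [this]
  have e2 : qCoef ν N i i = -2*1 + wfun (3-ν) 1 := by
    unfold qCoef
    rw [if_neg (by omega), if_neg (by omega), if_pos rfl, bCoef_diag,
      bCoef_mid (by omega : i-1 < i) hiN]
    have : ((i:ℕ):ℝ) - ((i-1:ℕ):ℝ) = 1 := by
      rw [Nat.cast_sub hi1]; push_cast; ring
    rw [this]
  rw [gCoef, e1, e2, wfun_one hs0]
  ring

lemma gCoef_one_zero (hν1 : 1 < ν) (hν2 : ν ≤ 2) (hN : 2 ≤ N) :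
    gCoef ν N 1 0 = ((3-ν)-2)*(2:ℝ)^((3-ν)-1) + 5 - 2*(3-ν) := by
  have hs0 : (3:ℝ)-ν ≠ 0 := by intro h; linarith
  have e1 : pCoef ν 1 0 = 1 - 2 * Bfun (3-ν) 1 + Bfun (3-ν) 2 := by
    unfold pCoef
    rw [if_pos (by omega : (0:ℕ) < 1)]
    norm_num
    rw [aCoef_diag, aCoef_zero (le_refl 1), aCoef_zero (by omega : 1 ≤ 2)]
    norm_num
  have e2 : qCoef ν N 1 0 = 1 := by
    unfold qCoef
    rw [if_neg (by omega), if_pos (by omega : 0+1 = 1), show (1:ℕ)-1 = 0 by omega, bCoef_diag]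
  rw [gCoef, e1, e2, Bfun_one hs0, Bfun_two, two_rpow_succ (3-ν)]
  ring

lemma gCoef_last (hν1 : 1 < ν) (hν2 : ν ≤ 2) (hN : 2 ≤ N) :
    gCoef ν N (N-1) N = ((3-ν)-2)*(2:ℝ)^((3-ν)-1) + 5 - 2*(3-ν) := by
  have hs0 : (3:ℝ)-ν ≠ 0 := by intro h; linarith
  have e1 : pCoef ν (N-1) N = 1 := by
    unfold pCoef
    rw [if_neg (by omega), if_neg (by omega), if_pos (by omega : N = (N-1)+1), aCoef_diag]
  have e2 : qCoef ν N (N-1) N = Bfun (3-ν) 2 - 2 * Bfun (3-ν) 1 + 1 := by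
    unfold qCoef
    rw [if_neg (by omega), if_neg (by omega), if_neg (by omega)]
    rw [show (N-1)+1 = N by omega, bCoef_diag]
    rw [bCoef_N (by omega : N-1-1 < N), bCoef_N (by omega : N-1 < N)]
    rw [show (N:ℝ) - ((N-1-1:ℕ):ℝ) = 2 by
      rw [Nat.cast_sub (by omega : 1 ≤ N-1), Nat.cast_sub (by omega : 1 ≤ N)]; push_cast; ring]
    rw [show (N:ℝ) - ((N-1:ℕ):ℝ) = 1 by rw [Nat.cast_sub (by omega : 1 ≤ N)]; push_cast; ring]
  rw [gCoef, e1, e2, Bfun_one hs0, Bfun_two, two_rpow_succ (3-ν)]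
  ring

lemma gCoef_offdiag_nonneg (hν1 : 1 < ν) (hν2 : ν ≤ 2) (hN : 2 ≤ N)
    (hi1 : 1 ≤ i) (hi2 : i ≤ N-1) {m : ℕ} (hm : m ≤ N) (hne : m ≠ i) :
    0 ≤ gCoef ν N i m := by
  have hs1 : (1:ℝ) ≤ 3-ν := by linarith
  have hs2 : (3:ℝ)-ν ≤ 2 := by linarith
  have hs0 : (3:ℝ)-ν ≠ 0 := by intro h; linarith
  rw [gCoef]
  rcases lt_or_gt_of_ne hne with hlt | hgt
  · -- m < i
    by_cases hc : m + 1 < i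
    · -- q = 0
      have hq : qCoef ν N i m = 0 := by unfold qCoef; rw [if_pos hc]
      rw [hq, add_zero]
      unfold pCoef
      rw [if_pos hlt]
      by_cases hm0 : m = 0
      · subst hm0
        rw [aCoef_zero (by omega), aCoef_zero (by omega), aCoef_zero (by omega)]
        have hx : (2:ℝ) ≤ (i:ℝ) := by exact_mod_cast (by omega : 2 ≤ i)
        exact secdiff_arg (Bfun (3-ν))
          (by rw [Nat.cast_sub (by omega : 1 ≤ i)]; push_cast; ring)
          rfl (by push_cast; ring)
          (Bfun_secdiff hs1 hs2 hx)
      · rw [aCoef_mid (by omega) (by omega), aCoef_mid (by omega) (by omega),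
          aCoef_mid (by omega) (by omega)]
        have hx : (2:ℝ) ≤ (i:ℝ) - m := by
          have : ((m:ℝ)+2) ≤ i := by exact_mod_cast (by omega : m+2 ≤ i)
          linarith
        exact secdiff_arg (wfun (3-ν))
          (by rw [Nat.cast_sub (by omega : 1 ≤ i)]; push_cast; ring)
          rfl (by push_cast; ring)
          (wfun_secdiff hs1 hs2 hx)
    · -- m + 1 = i
      have hmi : m + 1 = i := by omega
      have hq : qCoef ν N i m = 1 := by
        unfold qCoef
        rw [if_neg hc, if_pos hmi, bCoef_diag]
      rw [hq]
      unfold pCoef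
      rw [if_pos hlt]
      by_cases hm0 : m = 0
      · -- i = 1 : value φ
        subst hm0
        have hi' : i = 1 := by omega
        subst hi'
        rw [aCoef_diag, aCoef_zero (le_refl 1), aCoef_zero (by omega : 1 ≤ 2)]
        norm_num
        rw [Bfun_one hs0, Bfun_two]
        have hphi := phi_ge_one hs1 hs2
        rw [two_rpow_succ (3-ν)]
        nlinarith
      · -- interior: η
        have h1m : 1 ≤ m := by omega
        rw [show i - 1 = m by omega, aCoef_diag,
          aCoef_mid h1m (by omega), aCoef_mid h1m (by omega)]
        rw [show ((i:ℕ):ℝ) - m = 1 by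
          rw [show (i:ℕ) = m+1 from hmi.symm]; push_cast; ring]
        rw [show ((i+1:ℕ):ℝ) - m = 2 by
          rw [show (i:ℕ) = m+1 from hmi.symm]; push_cast; ring]
        rw [wfun_one hs0, wfun_two]
        have := eta_nonneg hs1 hs2
        nlinarith
  · -- m > i
    have hp : pCoef ν i m = (if m = i + 1 then 1 else 0) := by
      unfold pCoef
      rw [if_neg (by omega), if_neg (by omega)]
      by_cases h : m = i+1
      · rw [if_pos h, if_pos h, aCoef_diag]
      · rw [if_neg h, if_neg h]
    have hqform : qCoef ν N i m
        = bCoef ν N (i-1) m - 2 * bCoef ν N i m + bCoef ν N (i+1) m := by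
      unfold qCoef
      rw [if_neg (by omega), if_neg (by omega), if_neg (by omega)]
    rw [hp, hqform]
    by_cases hm1 : m = i + 1
    · rw [if_pos hm1]
      by_cases hmN : m = N
      · -- boundary: φ
        have hiN : i + 1 = N := by omega
        rw [hm1, hiN, bCoef_diag, bCoef_N (by omega : i-1 < N), bCoef_N (by omega : i < N)]
        rw [show (N:ℝ) - ((i-1:ℕ):ℝ) = 2 by
          rw [Nat.cast_sub (by omega : 1 ≤ i), ← hiN]; push_cast; ring]
        rw [show (N:ℝ) - ((i:ℕ):ℝ) = 1 by rw [← hiN]; push_cast; ring]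
        rw [Bfun_one hs0, Bfun_two]
        have hphi := phi_ge_one hs1 hs2
        rw [two_rpow_succ (3-ν)]
        nlinarith
      · -- interior: η
        rw [hm1, bCoef_diag, bCoef_mid (by omega : i-1 < i+1) (by omega : i+1 < N),
          bCoef_mid (by omega : i < i+1) (by omega : i+1 < N)]
        rw [show ((i+1:ℕ):ℝ) - ((i-1:ℕ):ℝ) = 2 by
          rw [Nat.cast_sub (by omega : 1 ≤ i)]; push_cast; ring]
        rw [show ((i+1:ℕ):ℝ) - ((i:ℕ):ℝ) = 1 by push_cast; ring]
        rw [wfun_one hs0, wfun_two]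
        have := eta_nonneg hs1 hs2
        nlinarith
    · rw [if_neg hm1]
      rw [zero_add]
      have hm2 : i + 2 ≤ m := by omega
      by_cases hmN : m = N
      · rw [hmN, bCoef_N (by omega : i-1 < N), bCoef_N (by omega : i < N),
          bCoef_N (by omega : i+1 < N)]
        have hx : (2:ℝ) ≤ (N:ℝ) - i := by
          have : ((i:ℝ)+2) ≤ N := by exact_mod_cast (by omega : i+2 ≤ N)
          linarith
        exact secdiff_arg' (Bfun (3-ν))
          (by rw [Nat.cast_sub (by omega : 1 ≤ i)]; push_cast; ring)
          rfl (by push_cast; ring)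
          (Bfun_secdiff hs1 hs2 hx)
      · rw [bCoef_mid (by omega : i-1 < m) (by omega : m < N),
          bCoef_mid (by omega : i < m) (by omega : m < N),
          bCoef_mid (by omega : i+1 < m) (by omega : m < N)]
        have hx : (2:ℝ) ≤ (m:ℝ) - i := by
          have : ((i:ℝ)+2) ≤ m := by exact_mod_cast (by omega : i+2 ≤ m)
          linarith
        exact secdiff_arg' (wfun (3-ν))
          (by rw [Nat.cast_sub (by omega : 1 ≤ i)]; push_cast; ring)
          rfl (by push_cast; ring)
          (wfun_secdiff hs1 hs2 hx)

end gvals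

section rowsum
variable {ν : ℝ} {N i : ℕ}

/-- row sums of aCoef -/
noncomputable def SA (ν : ℝ) (j : ℕ) : ℝ := ∑ m ∈ Finset.range (j+1), aCoef ν j m

/-- tail sums of bCoef -/
noncomputable def TB (ν : ℝ) (N j : ℕ) : ℝ := ∑ m ∈ Finset.Icc j N, bCoef ν N j m

lemma SA_zero : SA ν 0 = 1 := by simp [SA, aCoef_diag]

lemma SA_val (hsnz : (3:ℝ)-ν ≠ 0) {j : ℕ} (hj : 1 ≤ j) : SA ν j = (3-ν) * (j:ℝ)^((3-ν)-1) := by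
  have hjpos : (0:ℝ) < j := by exact_mod_cast hj
  have hs0 : (3:ℝ)-ν ≠ 0 := hsnz
  have hsplit : SA ν j = aCoef ν j 0 + ∑ t ∈ Finset.range j, aCoef ν j (t+1) := by
    rw [SA, Finset.sum_range_succ']
    ring
  -- the inner sum telescopes to dfun (3-ν) j
  have htel : ∑ t ∈ Finset.range j, aCoef ν j (t+1) = dfun (3-ν) (j:ℝ) := by
    obtain ⟨j', rfl⟩ : ∃ j', j = j' + 1 := ⟨j - 1, by omega⟩
    rw [Finset.sum_range_succ, aCoef_diag]
    have hcongr : ∀ t ∈ Finset.range j', aCoef ν (j'+1) (t+1)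
        = (fun u : ℕ => dfun (3-ν) ((j':ℝ) - (u:ℕ) + 1)) t
          - (fun u : ℕ => dfun (3-ν) ((j':ℝ) - (u:ℕ) + 1)) (t+1) := by
      intro t ht
      simp only [Finset.mem_range] at ht
      rw [aCoef_mid (by omega) (by omega)]
      simp only [wfun, dfun]
      push_cast
      ring_nf
    rw [Finset.sum_congr rfl hcongr, Finset.sum_range_sub']
    simp only [dfun]
    push_cast
    rw [show (j':ℝ) - 0 + 1 = (j':ℝ)+1 by ring, show (j':ℝ) - (j':ℝ) + 1 = 1 by ring,
      show (1:ℝ) - 1 = 0 by norm_num, Real.one_rpow, Real.zero_rpow hs0]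
    ring
  rw [hsplit, htel, aCoef_zero hj, Bfun, dfun]
  have key : (j:ℝ)^(3-ν) = (j:ℝ)^((3-ν)-1) * j := by
    rw [show (3:ℝ)-ν = ((3-ν)-1)+1 by ring, Real.rpow_add_one hjpos.ne']
    ring_nf
  rw [key]
  ring

lemma TB_top : TB ν N N = 1 := by
  rw [TB, Finset.Icc_self, Finset.sum_singleton, bCoef_diag]

lemma TB_val (hsnz : (3:ℝ)-ν ≠ 0) {j : ℕ} (hj : j ≤ N-1) (hN : 1 ≤ N) :
    TB ν N j = (3-ν) * ((N:ℝ)-(j:ℝ))^((3-ν)-1) := by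
  have hjN : j < N := by omega
  have hpos : (0:ℝ) < (N:ℝ)-(j:ℝ) := by
    have : (j:ℝ) < N := by exact_mod_cast hjN
    linarith
  have h1 : TB ν N j = bCoef ν N j j + (∑ t ∈ Finset.range (N-(j+1)), bCoef ν N j (j+1+t))
      + bCoef ν N j N := by
    rw [TB, ← Finset.Ico_add_one_right_eq_Icc, Finset.sum_eq_sum_Ico_succ_bot (by omega : j < N+1),
      show N+1 = N+1 from rfl, Finset.sum_Ico_succ_top (by omega : j+1 ≤ N),
      Finset.sum_Ico_eq_sum_range]
    ring
  have htel : ∑ t ∈ Finset.range (N-(j+1)), bCoef ν N j (j+1+t)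
      = dfun (3-ν) ((N:ℝ)-j) - 1 := by
    have hcongr : ∀ t ∈ Finset.range (N-(j+1)), bCoef ν N j (j+1+t)
        = (fun u : ℕ => dfun (3-ν) ((u:ℕ)+1)) (t+1) - (fun u : ℕ => dfun (3-ν) ((u:ℕ)+1)) t := by
      intro t ht
      simp only [Finset.mem_range] at ht
      rw [bCoef_mid (by omega) (by omega)]
      simp only [wfun, dfun]
      push_cast
      ring_nf
    rw [Finset.sum_congr rfl hcongr,
      Finset.sum_range_sub (fun u : ℕ => dfun (3-ν) ((u:ℕ)+1)) (N-(j+1))]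
    simp only [dfun]
    have e1 : ((N-(j+1):ℕ):ℝ) + 1 = (N:ℝ) - j := by
      rw [Nat.cast_sub (by omega : j+1 ≤ N)]; push_cast; ring
    rw [e1]
    push_cast
    rw [show (0:ℝ)+1 = 1 by norm_num, show (1:ℝ)-1 = 0 by norm_num, Real.one_rpow,
      Real.zero_rpow hsnz]
    ring
  rw [h1, htel, bCoef_diag, bCoef_N hjN, Bfun, dfun]
  have key : ((N:ℝ)-j)^(3-ν) = ((N:ℝ)-j)^((3-ν)-1) * ((N:ℝ)-j) := by
    rw [show (3:ℝ)-ν = ((3-ν)-1)+1 by ring, Real.rpow_add_one hpos.ne']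
    ring_nf
  rw [key]
  ring

lemma sumP (hi1 : 1 ≤ i) (hi2 : i ≤ N-1) (hN : 2 ≤ N) :
    ∑ m ∈ Finset.range (N+1), pCoef ν i m = SA ν (i-1) - 2 * SA ν i + SA ν (i+1) := by
  obtain ⟨i', rfl⟩ : ∃ i', i = i' + 1 := ⟨i - 1, by omega⟩
  have hzero : ∀ m ∈ Finset.range (N+1), m ∉ Finset.range (i'+1+2) → pCoef ν (i'+1) m = 0 := by
    intro m _ hm
    simp only [Finset.mem_range] at hm
    unfold pCoef
    rw [if_neg (by omega), if_neg (by omega), if_neg (by omega)]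
  rw [← Finset.sum_subset (by intro x hx; simp only [Finset.mem_range] at *; omega :
      Finset.range (i'+1+2) ⊆ Finset.range (N+1)) hzero]
  rw [show i'+1+2 = (i'+2)+1 by omega, Finset.sum_range_succ, Finset.sum_range_succ]
  have hpi : pCoef ν (i'+1) (i'+1) = -2 * aCoef ν (i'+1) (i'+1) + aCoef ν (i'+2) (i'+1) := by
    unfold pCoef
    rw [if_neg (by omega), if_pos rfl, show i'+1+1 = i'+2 by omega]
  have hpi1 : pCoef ν (i'+1) (i'+2) = aCoef ν (i'+2) (i'+2) := by
    unfold pCoef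
    rw [if_neg (by omega), if_neg (by omega), if_pos (by omega), show i'+1+1 = i'+2 by omega]
  have hmid : ∀ m ∈ Finset.range (i'+1), pCoef ν (i'+1) m
      = aCoef ν i' m - 2 * aCoef ν (i'+1) m + aCoef ν (i'+2) m := by
    intro m hm
    simp only [Finset.mem_range] at hm
    unfold pCoef
    rw [if_pos (by omega), show i'+1-1 = i' by omega, show i'+1+1 = i'+2 by omega]
  rw [Finset.sum_congr rfl hmid]
  have e1 : SA ν (i'+1-1) = ∑ m ∈ Finset.range (i'+1), aCoef ν i' m := by
    rw [SA, show i'+1-1 = i' by omega]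
  have e2 : SA ν (i'+1) = (∑ m ∈ Finset.range (i'+1), aCoef ν (i'+1) m)
      + aCoef ν (i'+1) (i'+1) := by
    rw [SA, Finset.sum_range_succ]
  have e3 : SA ν (i'+1+1) = ((∑ m ∈ Finset.range (i'+1), aCoef ν (i'+2) m)
      + aCoef ν (i'+2) (i'+1)) + aCoef ν (i'+2) (i'+2) := by
    rw [SA, show i'+1+1+1 = (i'+1)+1+1 by omega, Finset.sum_range_succ, Finset.sum_range_succ,
      show i'+1+1 = i'+2 by omega]
  rw [hpi, hpi1, Finset.sum_add_distrib, Finset.sum_sub_distrib, ← Finset.mul_sum,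
    e1, e2, e3]
  ring

lemma sumQ (hi1 : 1 ≤ i) (hi2 : i ≤ N-1) (hN : 2 ≤ N) :
    ∑ m ∈ Finset.range (N+1), qCoef ν N i m = TB ν N (i-1) - 2 * TB ν N i + TB ν N (i+1) := by
  obtain ⟨i', rfl⟩ : ∃ i', i = i' + 1 := ⟨i - 1, by omega⟩
  simp only [show i'+1-1 = i' by omega]
  have hzero : ∀ m ∈ Finset.range (N+1), m ∉ Finset.Ico i' (N+1) → qCoef ν N (i'+1) m = 0 := by
    intro m hm hm2
    simp only [Finset.mem_range] at hm
    simp only [Finset.mem_Ico] at hm2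
    unfold qCoef
    rw [if_pos (by omega)]
  rw [← Finset.sum_subset (by intro x hx; simp only [Finset.mem_Ico, Finset.mem_range] at *; omega :
      Finset.Ico i' (N+1) ⊆ Finset.range (N+1)) hzero]
  rw [Finset.sum_eq_sum_Ico_succ_bot (by omega : i' < N+1),
    Finset.sum_eq_sum_Ico_succ_bot (by omega : i'+1 < N+1)]
  have hq1 : qCoef ν N (i'+1) i' = bCoef ν N i' i' := by
    unfold qCoef
    rw [if_neg (by omega), if_pos (by omega)]
    norm_num [show i'+1-1 = i' by omega]
  have hq2 : qCoef ν N (i'+1) (i'+1) = -2 * bCoef ν N (i'+1) (i'+1) + bCoef ν N i' (i'+1) := by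
    unfold qCoef
    rw [if_neg (by omega), if_neg (by omega), if_pos rfl]
    norm_num [show i'+1-1 = i' by omega]
  have hmid : ∀ m ∈ Finset.Ico (i'+2) (N+1), qCoef ν N (i'+1) m
      = bCoef ν N i' m - 2 * bCoef ν N (i'+1) m + bCoef ν N (i'+2) m := by
    intro m hm
    simp only [Finset.mem_Ico] at hm
    unfold qCoef
    rw [if_neg (by omega), if_neg (by omega), if_neg (by omega)]
    norm_num [show i'+1-1 = i' by omega, show i'+1+1 = i'+2 by omega]
  rw [show i'+1+1 = i'+2 by omega, Finset.sum_congr rfl hmid]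
  have e1 : TB ν N i' = bCoef ν N i' i' + (bCoef ν N i' (i'+1)
      + ∑ m ∈ Finset.Ico (i'+2) (N+1), bCoef ν N i' m) := by
    rw [TB, ← Finset.Ico_add_one_right_eq_Icc, Finset.sum_eq_sum_Ico_succ_bot (by omega : i' < N+1),
      Finset.sum_eq_sum_Ico_succ_bot (by omega : i'+1 < N+1), show i'+1+1 = i'+2 by omega]
  have e2 : TB ν N (i'+1) = bCoef ν N (i'+1) (i'+1)
      + ∑ m ∈ Finset.Ico (i'+2) (N+1), bCoef ν N (i'+1) m := by
    rw [TB, ← Finset.Ico_add_one_right_eq_Icc, Finset.sum_eq_sum_Ico_succ_bot (by omega : i'+1 < N+1),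
      show i'+1+1 = i'+2 by omega]
  have e3 : TB ν N (i'+1+1) = ∑ m ∈ Finset.Ico (i'+2) (N+1), bCoef ν N (i'+2) m := by
    rw [TB, ← Finset.Ico_add_one_right_eq_Icc, show i'+1+1 = i'+2 by omega]
  rw [hq1, hq2, Finset.sum_add_distrib, Finset.sum_sub_distrib, ← Finset.mul_sum,
    e1, e2, e3]
  ring

lemma rowsum_nonpos (hν1 : 1 < ν) (hν2 : ν ≤ 2) (hN : 2 ≤ N)
    (hi1 : 1 ≤ i) (hi2 : i ≤ N-1) :
    ∑ m ∈ Finset.Icc 1 (N-1), gCoef ν N i m ≤ 0 := by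
  have hs1 : (1:ℝ) ≤ 3-ν := by linarith
  have hs2 : (3:ℝ)-ν ≤ 2 := by linarith
  have hs0 : (3:ℝ)-ν ≠ 0 := by intro h; linarith
  by_cases hN2 : N = 2
  · subst hN2
    have hi : i = 1 := by omega
    subst hi
    rw [show (2:ℕ)-1 = 1 by omega, Finset.Icc_self, Finset.sum_singleton,
      gCoef_diag hν1 hν2 (by omega) (by omega) (by omega)]
    have := two_rpow_le_four hs2
    linarith
  · -- N ≥ 3
    have hN3 : 3 ≤ N := by omega
    have hsplit : ∑ m ∈ Finset.Icc 1 (N-1), gCoef ν N i m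
        = (∑ m ∈ Finset.range (N+1), gCoef ν N i m) - gCoef ν N i 0 - gCoef ν N i N := by
      rw [show Finset.range (N+1) = insert 0 (insert N (Finset.Icc 1 (N-1))) by
        ext x; simp only [Finset.mem_range, Finset.mem_insert, Finset.mem_Icc]; omega]
      rw [Finset.sum_insert (by simp only [Finset.mem_insert, Finset.mem_Icc]; omega),
        Finset.sum_insert (by simp only [Finset.mem_Icc]; omega)]
      ring
    have hfull : ∑ m ∈ Finset.range (N+1), gCoef ν N i m
        = (SA ν (i-1) - 2 * SA ν i + SA ν (i+1))
          + (TB ν N (i-1) - 2 * TB ν N i + TB ν N (i+1)) := by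
      simp only [gCoef, Finset.sum_add_distrib]
      rw [sumP hi1 hi2 hN, sumQ hi1 hi2 hN]
    rw [hsplit, hfull]
    rcases Nat.lt_or_ge i 2 with hi2' | hi2'
    · -- i = 1
      have hi' : i = 1 := by omega
      subst hi'
      simp only [show (1:ℕ)-1 = 0 from rfl, show (1:ℕ)+1 = 2 from rfl]
      rw [SA_zero, SA_val hs0 (le_refl 1), SA_val hs0 (by omega : 1 ≤ 2),
        TB_val hs0 (by omega : 0 ≤ N-1) (by omega), TB_val hs0 (by omega : 1 ≤ N-1) (by omega),
        TB_val hs0 (by omega : 2 ≤ N-1) (by omega), gCoef_one_zero hν1 hν2 hN]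
      have hTB : (3-ν)*((N:ℝ)-1-1)^((3-ν)-1) - 2*((3-ν)*((N:ℝ)-1)^((3-ν)-1))
          + (3-ν)*((N:ℝ)-1+1)^((3-ν)-1) ≤ 0 := by
        apply Sfun_secdiff hs1 hs2
        have : (3:ℝ) ≤ (N:ℝ) := by exact_mod_cast hN3
        linarith
      have hgN : 0 ≤ gCoef ν N 1 N :=
        gCoef_offdiag_nonneg hν1 hν2 hN (le_refl 1) hi2 (le_refl N) (by omega)
      have hφ := phi_ge_one hs1 hs2
      have h4 := two_rpow_le_four hs2
      have hcast0 : ((N:ℝ) - (0:ℕ)) = (N:ℝ) - 1 + 1 := by push_cast; ring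
      have hcast1 : ((N:ℝ) - (1:ℕ)) = (N:ℝ) - 1 := by push_cast; ring
      have hcast2 : ((N:ℝ) - (2:ℕ)) = (N:ℝ) - 1 - 1 := by push_cast; ring
      rw [hcast0, hcast1, hcast2]
      push_cast
      rw [Real.one_rpow]
      rw [two_rpow_succ (3-ν)] at h4
      ring_nf at hφ h4 hTB hgN ⊢
      linarith
    · rcases Nat.lt_or_ge i (N-1) with hiN | hiN
      · -- 2 ≤ i ≤ N-2 : all four pieces signed
        have hSA : (3-ν)*((i:ℝ)-1)^((3-ν)-1) - 2*((3-ν)*(i:ℝ)^((3-ν)-1))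
            + (3-ν)*((i:ℝ)+1)^((3-ν)-1) ≤ 0 := by
          apply Sfun_secdiff hs1 hs2
          exact_mod_cast (by omega : 2 ≤ i)
        have hTB : (3-ν)*((N:ℝ)-(i:ℝ)-1)^((3-ν)-1) - 2*((3-ν)*((N:ℝ)-(i:ℝ))^((3-ν)-1))
            + (3-ν)*((N:ℝ)-(i:ℝ)+1)^((3-ν)-1) ≤ 0 := by
          apply Sfun_secdiff hs1 hs2
          have : ((i:ℝ)+2) ≤ (N:ℝ) := by exact_mod_cast (by omega : i+2 ≤ N)
          linarith
        have hg0 : 0 ≤ gCoef ν N i 0 :=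
          gCoef_offdiag_nonneg hν1 hν2 hN hi1 hi2 (by omega) (by omega)
        have hgN : 0 ≤ gCoef ν N i N :=
          gCoef_offdiag_nonneg hν1 hν2 hN hi1 hi2 (le_refl N) (by omega)
        rw [SA_val hs0 (by omega : 1 ≤ i-1), SA_val hs0 (by omega : 1 ≤ i),
          SA_val hs0 (by omega : 1 ≤ i+1),
          TB_val hs0 (by omega : i-1 ≤ N-1) (by omega),
          TB_val hs0 (by omega : i ≤ N-1) (by omega),
          TB_val hs0 (by omega : i+1 ≤ N-1) (by omega)]
        rw [Nat.cast_sub (by omega : 1 ≤ i)]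
        push_cast
        ring_nf at hSA hTB hg0 hgN ⊢
        linarith
      · -- i = N-1
        have hi' : i = N-1 := by omega
        subst hi'
        rw [SA_val hs0 (by omega : 1 ≤ N-1-1), SA_val hs0 (by omega : 1 ≤ N-1),
          SA_val hs0 (by omega : 1 ≤ N-1+1),
          TB_val hs0 (by omega : N-1-1 ≤ N-1) (by omega),
          TB_val hs0 (by omega : N-1 ≤ N-1) (by omega),
          show N-1+1 = N by omega, TB_top, gCoef_last hν1 hν2 hN]
        have hgz : 0 ≤ gCoef ν N (N-1) 0 :=
          gCoef_offdiag_nonneg hν1 hν2 hN (by omega) (by omega) (by omega) (by omega)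
        have hSA : (3-ν)*((N:ℝ)-1-1)^((3-ν)-1) - 2*((3-ν)*((N:ℝ)-1)^((3-ν)-1))
            + (3-ν)*((N:ℝ)-1+1)^((3-ν)-1) ≤ 0 := by
          apply Sfun_secdiff hs1 hs2
          have : (3:ℝ) ≤ (N:ℝ) := by exact_mod_cast hN3
          linarith
        have hφ := phi_ge_one hs1 hs2
        have h4 := two_rpow_le_four hs2
        have hc1 : ((N-1-1:ℕ):ℝ) = (N:ℝ)-1-1 := by
          rw [Nat.cast_sub (by omega), Nat.cast_sub (by omega)]; push_cast; ring
        have hc2 : ((N-1:ℕ):ℝ) = (N:ℝ)-1 := by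
          rw [Nat.cast_sub (by omega)]; push_cast; ring
        have hc3 : ((N-1+1:ℕ):ℝ) = (N:ℝ)-1+1 := by
          rw [show N-1+1 = N by omega]; ring
        have hc4 : (N:ℝ) - ((N-1-1:ℕ):ℝ) = 2 := by rw [hc1]; ring
        have hc5 : (N:ℝ) - ((N-1:ℕ):ℝ) = 1 := by rw [hc2]; ring
        rw [hc4, hc5, hc1, hc2, Real.one_rpow]
        rw [two_rpow_succ (3-ν)] at h4
        ring_nf at hφ h4 hSA hgz ⊢
        linarith


end rowsum

lemma maxAbs2_le {Nx Ny : ℕ} {v : ℕ → ℕ → ℝ} {B : ℝ}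
    (h : ∀ i j, i ≤ Nx → j ≤ Ny → |v i j| ≤ B) : maxAbs2 Nx Ny v ≤ B := by
  apply Finset.sup'_le
  intro p hp
  rw [Finset.mem_product, Finset.mem_range, Finset.mem_range] at hp
  exact h p.1 p.2 (by omega) (by omega)

lemma le_maxAbs2 {Nx Ny i j : ℕ} (v : ℕ → ℕ → ℝ) (hi : i ≤ Nx) (hj : j ≤ Ny) :
    |v i j| ≤ maxAbs2 Nx Ny v :=
  Finset.le_sup' (f := fun p => |v p.1 p.2|) (b := (i,j))
    (by rw [Finset.mem_product, Finset.mem_range, Finset.mem_range]; omega)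

lemma kappa_nonpos {ν : ℝ} (hν1 : 1 < ν) (hν2 : ν ≤ 2) : kappa ν ≤ 0 := by
  have hπ := Real.pi_pos
  have hcos : Real.cos (ν * Real.pi / 2) ≤ 0 := by
    apply Real.cos_nonpos_of_pi_div_two_le_of_le
    · nlinarith
    · nlinarith
  rw [kappa]
  apply div_nonpos_of_nonneg_of_nonpos (by norm_num)
  linarith

/-- telescoping sum of lCoef differences -/
lemma lCoef_telescope (γ : ℝ) {k : ℕ} (hk : 1 ≤ k) :
    ∑ s ∈ Finset.Icc 1 (k-1), (lCoef γ s - lCoef γ (s+1)) = lCoef γ 1 - lCoef γ k := by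
  rw [← Finset.Ico_add_one_right_eq_Icc, show k-1+1 = k by omega, Finset.sum_Ico_eq_sum_range]
  have hcongr : ∀ t ∈ Finset.range (k-1), (lCoef γ (1+t) - lCoef γ (1+t+1))
      = (fun u : ℕ => lCoef γ (1+u)) t - (fun u : ℕ => lCoef γ (1+u)) (t+1) := by
    intro t _
    simp only []
    rw [show 1+(t+1) = 1+t+1 by omega]
  rw [Finset.sum_congr rfl hcongr, Finset.sum_range_sub' (fun u : ℕ => lCoef γ (1+u)) (k-1)]
  rw [show 1+0 = 1 from rfl, show 1+(k-1) = k by omega]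


end Thm44
end Thm44Aux

set_option maxHeartbeats 1000000 in
open Thm44 in
/-- Theorem 4.4 (case `0 < γ < 1`): conditional convergence of the two-dimensional
explicit scheme under the stability condition
`Γ(2-γ) C_max (τ^γ/Δx^α + τ^γ/Δy^β) ≤ 1 - 2^(-γ)`. -/
theorem explicit_2d_convergence (γ α β : ℝ) (hγ : γ ∈ Set.Ioo (0:ℝ) 1)
    (hα : α ∈ Set.Ioc (1:ℝ) 2) (hβ : β ∈ Set.Ioc (1:ℝ) 2)
    (Nx Ny Nt : ℕ) (hNx : 2 ≤ Nx) (hNy : 2 ≤ Ny) (hNt : 1 ≤ Nt)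
    (τ Δx Δy : ℝ) (hτ : 0 < τ) (hΔx : 0 < Δx) (hΔy : 0 < Δy)
    (c d : ℕ → ℕ → ℕ → ℝ) (Cmax : ℝ)
    (hcd : ∀ i j k : ℕ, 1 ≤ i → i ≤ Nx - 1 → 1 ≤ j → j ≤ Ny - 1 → k ≤ Nt - 1 →
      0 ≤ c i j k ∧ 0 ≤ d i j k ∧
      (-kappa α) * (4 - (2:ℝ) ^ (3 - α)) * c i j k / Real.Gamma (4 - α) ≤ Cmax ∧
      (-kappa β) * (4 - (2:ℝ) ^ (3 - β)) * d i j k / Real.Gamma (4 - β) ≤ Cmax)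
    (hstab : Real.Gamma (2 - γ) * Cmax * (τ ^ γ / Δx ^ α + τ ^ γ / Δy ^ β)
      ≤ 1 - (2:ℝ) ^ (-γ))
    (σ' σ'' : ℕ → ℕ → ℕ → ℝ)
    (hσ : ∀ i j k : ℕ, 1 ≤ i → i ≤ Nx - 1 → 1 ≤ j → j ≤ Ny - 1 → k ≤ Nt - 1 →
      σ' i j k = -(Real.Gamma (2 - γ) * τ ^ γ * kappa α * c i j k)
          / (Real.Gamma (4 - α) * Δx ^ α) ∧
      σ'' i j k = -(Real.Gamma (2 - γ) * τ ^ γ * kappa β * d i j k)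
          / (Real.Gamma (4 - β) * Δy ^ β))
    (R : ℕ → ℕ → ℕ → ℝ) (Rmax : ℝ)
    (hRmax : IsGreatest
      {x : ℝ | ∃ i j k : ℕ, 1 ≤ i ∧ i ≤ Nx - 1 ∧ 1 ≤ j ∧ j ≤ Ny - 1 ∧ 1 ≤ k ∧ k ≤ Nt ∧
        x = |R k i j|} Rmax)
    (ε : ℕ → ℕ → ℕ → ℝ)
    (hinit : ∀ i j : ℕ, i ≤ Nx → j ≤ Ny → ε 0 i j = 0)
    (hbc : ∀ k i j : ℕ, 1 ≤ k → k ≤ Nt → i ≤ Nx → j ≤ Ny →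
      (i = 0 ∨ i = Nx ∨ j = 0 ∨ j = Ny) → ε k i j = 0)
    (hscheme0 : ∀ i j : ℕ, 1 ≤ i → i ≤ Nx - 1 → 1 ≤ j → j ≤ Ny - 1 → ε 1 i j = R 1 i j)
    (hscheme : ∀ i j k : ℕ, 1 ≤ i → i ≤ Nx - 1 → 1 ≤ j → j ≤ Ny - 1 → 1 ≤ k → k + 1 ≤ Nt →
      ε (k + 1) i j
      = (1 - lCoef γ 1 + σ' i j k * gCoef α Nx i i + σ'' i j k * gCoef β Ny j j) * ε k i j
        + (∑ s ∈ Finset.Icc 1 (k - 1), (lCoef γ s - lCoef γ (s + 1)) * ε (k - s) i j)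
        + σ' i j k * (∑ m ∈ (Finset.range (Nx + 1)).erase i, gCoef α Nx i m * ε k m j)
        + σ'' i j k * (∑ m ∈ (Finset.range (Ny + 1)).erase j, gCoef β Ny j m * ε k i m)
        + R (k + 1) i j) :
    (∀ k : ℕ, 1 ≤ k → k ≤ Nt →
      maxAbs2 Nx Ny (ε k) ≤ Rmax / lCoef γ (k - 1) ∧
      Rmax / lCoef γ (k - 1) ≤ (k : ℝ) ^ γ / (1 - γ) * Rmax) ∧
    (∀ T C : ℝ, 0 < T → (Nt : ℝ) * τ ≤ T → 0 < C →
      (∀ i j k : ℕ, 1 ≤ i → i ≤ Nx - 1 → 1 ≤ j → j ≤ Ny - 1 → 1 ≤ k → k ≤ Nt →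
        |R k i j| ≤ C * τ ^ γ * (τ ^ (2 - γ) + Δx ^ 2 + Δy ^ 2)) →
      ∀ k : ℕ, k ≤ Nt →
        maxAbs2 Nx Ny (ε k) ≤ C * T ^ γ / (1 - γ) * (τ ^ (2 - γ) + Δx ^ 2 + Δy ^ 2)) := by
  obtain ⟨hγ0, hγ1⟩ := hγ
  obtain ⟨hα1, hα2⟩ := hα
  obtain ⟨hβ1, hβ2⟩ := hβ
  have hΓγ : 0 < Real.Gamma (2-γ) := Real.Gamma_pos_of_pos (by linarith)
  have hΓα : 0 < Real.Gamma (4-α) := Real.Gamma_pos_of_pos (by linarith)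
  have hΓβ : 0 < Real.Gamma (4-β) := Real.Gamma_pos_of_pos (by linarith)
  have hτγ : 0 < τ^γ := Real.rpow_pos_of_pos hτ γ
  have hΔxα : 0 < Δx^α := Real.rpow_pos_of_pos hΔx α
  have hΔyβ : 0 < Δy^β := Real.rpow_pos_of_pos hΔy β
  have hκα : kappa α ≤ 0 := kappa_nonpos hα1 hα2
  have hκβ : kappa β ≤ 0 := kappa_nonpos hβ1 hβ2
  have hRmax0 : 0 ≤ Rmax := by
    obtain ⟨i, j, k, _, _, _, _, _, _, hEq⟩ := hRmax.1
    rw [hEq]; exact abs_nonneg _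
  have hRb : ∀ i j k : ℕ, 1 ≤ i → i ≤ Nx-1 → 1 ≤ j → j ≤ Ny-1 → 1 ≤ k → k ≤ Nt →
      |R k i j| ≤ Rmax := fun i j k h1 h2 h3 h4 h5 h6 =>
    hRmax.2 ⟨i, j, k, h1, h2, h3, h4, h5, h6, rfl⟩
  have hσnn : ∀ i j k : ℕ, 1 ≤ i → i ≤ Nx-1 → 1 ≤ j → j ≤ Ny-1 → k ≤ Nt-1 →
      0 ≤ σ' i j k ∧ 0 ≤ σ'' i j k := by
    intro i j k h1 h2 h3 h4 h5
    obtain ⟨hc0, hd0, _, _⟩ := hcd i j k h1 h2 h3 h4 h5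
    obtain ⟨hσx, hσy⟩ := hσ i j k h1 h2 h3 h4 h5
    constructor
    · rw [hσx]
      apply div_nonneg _ (by positivity)
      have : Real.Gamma (2-γ) * τ^γ * kappa α * c i j k ≤ 0 := by
        have h := mul_nonneg (mul_nonneg hΓγ.le hτγ.le) hc0
        nlinarith
      linarith
    · rw [hσy]
      apply div_nonneg _ (by positivity)
      have : Real.Gamma (2-γ) * τ^γ * kappa β * d i j k ≤ 0 := by
        have h := mul_nonneg (mul_nonneg hΓγ.le hτγ.le) hd0
        nlinarith
      linarith
  have hA : ∀ i j k : ℕ, 1 ≤ i → i ≤ Nx-1 → 1 ≤ j → j ≤ Ny-1 → k ≤ Nt-1 →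
      0 ≤ 1 - lCoef γ 1 + σ' i j k * gCoef α Nx i i + σ'' i j k * gCoef β Ny j j := by
    intro i j k h1 h2 h3 h4 h5
    obtain ⟨hc0, hd0, hCx, hCy⟩ := hcd i j k h1 h2 h3 h4 h5
    obtain ⟨hσx, hσy⟩ := hσ i j k h1 h2 h3 h4 h5
    rw [gCoef_diag hα1 hα2 hNx h1 h2, gCoef_diag hβ1 hβ2 hNy h3 h4]
    have hx : σ' i j k * (4 - (2:ℝ)^(3-α)) ≤ Real.Gamma (2-γ) * (τ^γ/Δx^α) * Cmax := by
      have e : σ' i j k * (4 - (2:ℝ)^(3-α)) = (Real.Gamma (2-γ) * (τ^γ/Δx^α))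
          * ((-kappa α) * (4 - (2:ℝ)^(3-α)) * c i j k / Real.Gamma (4-α)) := by
        rw [hσx]
        field_simp
      rw [e]
      exact mul_le_mul_of_nonneg_left hCx (by positivity)
    have hy : σ'' i j k * (4 - (2:ℝ)^(3-β)) ≤ Real.Gamma (2-γ) * (τ^γ/Δy^β) * Cmax := by
      have e : σ'' i j k * (4 - (2:ℝ)^(3-β)) = (Real.Gamma (2-γ) * (τ^γ/Δy^β))
          * ((-kappa β) * (4 - (2:ℝ)^(3-β)) * d i j k / Real.Gamma (4-β)) := by
        rw [hσy]
        field_simp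
      rw [e]
      exact mul_le_mul_of_nonneg_left hCy (by positivity)
    have h1l := one_sub_lCoef_one hγ0 hγ1 (γ := γ)
    linarith [hx, hy, hstab, h1l]
  -- the main induction
  have key : ∀ k : ℕ, 1 ≤ k → k ≤ Nt → maxAbs2 Nx Ny (ε k) ≤ Rmax / lCoef γ (k-1) := by
    intro k
    induction k using Nat.strong_induction_on with
    | _ k IH =>
    intro hk1 hkNt
    rcases eq_or_lt_of_le hk1 with h1 | h2
    · -- base case k = 1
      rw [← h1, show (1:ℕ)-1 = 0 from rfl, lCoef_zero hγ1, div_one]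
      apply maxAbs2_le
      intro i j hi hj
      by_cases hint : 1 ≤ i ∧ i ≤ Nx-1 ∧ 1 ≤ j ∧ j ≤ Ny-1
      · obtain ⟨h1', h2', h3', h4'⟩ := hint
        rw [hscheme0 i j h1' h2' h3' h4']
        exact hRb i j 1 h1' h2' h3' h4' le_rfl hNt
      · rw [hbc 1 i j le_rfl hNt hi hj (by omega)]
        simpa using hRmax0
    · -- step
      obtain ⟨k', rfl⟩ : ∃ k', k = k' + 1 := ⟨k - 1, by omega⟩
      have hk'1 : 1 ≤ k' := by omega
      have hk'Nt : k' + 1 ≤ Nt := hkNt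
      have hlpos : 0 < lCoef γ k' := lCoef_pos hγ0 hγ1 k'
      set M := Rmax / lCoef γ k' with hM
      have hM0 : 0 ≤ M := div_nonneg hRmax0 hlpos.le
      have hMall : ∀ j' : ℕ, 1 ≤ j' → j' ≤ k' → maxAbs2 Nx Ny (ε j') ≤ M := by
        intro j' hj1 hj2
        refine le_trans (IH j' (by omega) hj1 (by omega)) ?_
        rw [hM]
        apply div_le_div_of_nonneg_left hRmax0 hlpos
        exact lCoef_anti hγ0 hγ1 (by omega)
      rw [show (k'+1)-1 = k' from rfl]
      apply maxAbs2_le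
      intro i j hi hj
      by_cases hint : 1 ≤ i ∧ i ≤ Nx-1 ∧ 1 ≤ j ∧ j ≤ Ny-1
      swap
      · rw [hbc (k'+1) i j (by omega) hk'Nt hi hj (by omega)]
        simpa using hM0
      obtain ⟨hi1, hi2, hj1, hj2⟩ := hint
      have hkk : k' ≤ Nt - 1 := by omega
      obtain ⟨hσ1, hσ2⟩ := hσnn i j k' hi1 hi2 hj1 hj2 hkk
      have hAnn := hA i j k' hi1 hi2 hj1 hj2 hkk
      rw [hscheme i j k' hi1 hi2 hj1 hj2 hk'1 hk'Nt]
      -- εᵏ bound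
      have hεk : |ε k' i j| ≤ M := le_trans (le_maxAbs2 (ε k') hi hj) (hMall k' hk'1 le_rfl)
      -- history sum bound
      have hhist : |∑ s ∈ Finset.Icc 1 (k'-1), (lCoef γ s - lCoef γ (s+1)) * ε (k'-s) i j|
          ≤ (lCoef γ 1 - lCoef γ k') * M := by
        calc |∑ s ∈ Finset.Icc 1 (k'-1), (lCoef γ s - lCoef γ (s+1)) * ε (k'-s) i j|
            ≤ ∑ s ∈ Finset.Icc 1 (k'-1), |(lCoef γ s - lCoef γ (s+1)) * ε (k'-s) i j| :=
              Finset.abs_sum_le_sum_abs _ _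
          _ ≤ ∑ s ∈ Finset.Icc 1 (k'-1), (lCoef γ s - lCoef γ (s+1)) * M := by
              apply Finset.sum_le_sum
              intro s hs
              simp only [Finset.mem_Icc] at hs
              rw [abs_mul, abs_of_nonneg (sub_nonneg.mpr (lCoef_anti hγ0 hγ1 (by omega)))]
              apply mul_le_mul_of_nonneg_left _ (sub_nonneg.mpr (lCoef_anti hγ0 hγ1 (by omega)))
              exact le_trans (le_maxAbs2 (ε (k'-s)) hi hj) (hMall (k'-s) (by omega) (by omega))
          _ = (lCoef γ 1 - lCoef γ k') * M := by
              rw [← Finset.sum_mul, lCoef_telescope γ hk'1]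
      -- x-direction sum bound
      have hSx : |∑ m ∈ (Finset.range (Nx+1)).erase i, gCoef α Nx i m * ε k' m j|
          ≤ ((∑ m ∈ Finset.Icc 1 (Nx-1), gCoef α Nx i m) - gCoef α Nx i i) * M := by
        calc |∑ m ∈ (Finset.range (Nx+1)).erase i, gCoef α Nx i m * ε k' m j|
            ≤ ∑ m ∈ (Finset.range (Nx+1)).erase i, |gCoef α Nx i m * ε k' m j| :=
              Finset.abs_sum_le_sum_abs _ _
          _ = ∑ m ∈ (Finset.range (Nx+1)).erase i, gCoef α Nx i m * |ε k' m j| := by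
              apply Finset.sum_congr rfl
              intro m hm
              rw [Finset.mem_erase, Finset.mem_range] at hm
              rw [abs_mul, abs_of_nonneg (gCoef_offdiag_nonneg hα1 hα2 hNx hi1 hi2
                (by omega) hm.1)]
          _ = ∑ m ∈ (Finset.Icc 1 (Nx-1)).erase i, gCoef α Nx i m * |ε k' m j| := by
              symm
              apply Finset.sum_subset
              · intro x hx
                rw [Finset.mem_erase, Finset.mem_Icc] at hx
                rw [Finset.mem_erase, Finset.mem_range]
                exact ⟨hx.1, by omega⟩
              · intro x hx hx2
                rw [Finset.mem_erase, Finset.mem_range] at hx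
                rw [Finset.mem_erase, Finset.mem_Icc] at hx2
                have hbz : ε k' x j = 0 := by
                  apply hbc k' x j hk'1 (by omega) (by omega) hj
                  omega
                rw [hbz, abs_zero, mul_zero]
          _ ≤ ∑ m ∈ (Finset.Icc 1 (Nx-1)).erase i, gCoef α Nx i m * M := by
              apply Finset.sum_le_sum
              intro m hm
              rw [Finset.mem_erase, Finset.mem_Icc] at hm
              apply mul_le_mul_of_nonneg_left _ (gCoef_offdiag_nonneg hα1 hα2 hNx hi1 hi2
                (by omega) hm.1)
              exact le_trans (le_maxAbs2 (ε k') (by omega) hj) (hMall k' hk'1 le_rfl)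
          _ = ((∑ m ∈ Finset.Icc 1 (Nx-1), gCoef α Nx i m) - gCoef α Nx i i) * M := by
              rw [← Finset.sum_mul, Finset.sum_erase_eq_sub (by rw [Finset.mem_Icc]; omega)]
      -- y-direction sum bound
      have hSy : |∑ m ∈ (Finset.range (Ny+1)).erase j, gCoef β Ny j m * ε k' i m|
          ≤ ((∑ m ∈ Finset.Icc 1 (Ny-1), gCoef β Ny j m) - gCoef β Ny j j) * M := by
        calc |∑ m ∈ (Finset.range (Ny+1)).erase j, gCoef β Ny j m * ε k' i m|
            ≤ ∑ m ∈ (Finset.range (Ny+1)).erase j, |gCoef β Ny j m * ε k' i m| :=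
              Finset.abs_sum_le_sum_abs _ _
          _ = ∑ m ∈ (Finset.range (Ny+1)).erase j, gCoef β Ny j m * |ε k' i m| := by
              apply Finset.sum_congr rfl
              intro m hm
              rw [Finset.mem_erase, Finset.mem_range] at hm
              rw [abs_mul, abs_of_nonneg (gCoef_offdiag_nonneg hβ1 hβ2 hNy hj1 hj2
                (by omega) hm.1)]
          _ = ∑ m ∈ (Finset.Icc 1 (Ny-1)).erase j, gCoef β Ny j m * |ε k' i m| := by
              symm
              apply Finset.sum_subset
              · intro x hx
                rw [Finset.mem_erase, Finset.mem_Icc] at hx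
                rw [Finset.mem_erase, Finset.mem_range]
                exact ⟨hx.1, by omega⟩
              · intro x hx hx2
                rw [Finset.mem_erase, Finset.mem_range] at hx
                rw [Finset.mem_erase, Finset.mem_Icc] at hx2
                have hbz : ε k' i x = 0 := by
                  apply hbc k' i x hk'1 (by omega) hi (by omega)
                  omega
                rw [hbz, abs_zero, mul_zero]
          _ ≤ ∑ m ∈ (Finset.Icc 1 (Ny-1)).erase j, gCoef β Ny j m * M := by
              apply Finset.sum_le_sum
              intro m hm
              rw [Finset.mem_erase, Finset.mem_Icc] at hm
              apply mul_le_mul_of_nonneg_left _ (gCoef_offdiag_nonneg hβ1 hβ2 hNy hj1 hj2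
                (by omega) hm.1)
              exact le_trans (le_maxAbs2 (ε k') hi (by omega)) (hMall k' hk'1 le_rfl)
          _ = ((∑ m ∈ Finset.Icc 1 (Ny-1), gCoef β Ny j m) - gCoef β Ny j j) * M := by
              rw [← Finset.sum_mul, Finset.sum_erase_eq_sub (by rw [Finset.mem_Icc]; omega)]
      have hRk : |R (k'+1) i j| ≤ Rmax := hRb i j (k'+1) hi1 hi2 hj1 hj2 (by omega) hk'Nt
      have hGx : (∑ m ∈ Finset.Icc 1 (Nx-1), gCoef α Nx i m) ≤ 0 :=
        rowsum_nonpos hα1 hα2 hNx hi1 hi2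
      have hGy : (∑ m ∈ Finset.Icc 1 (Ny-1), gCoef β Ny j m) ≤ 0 :=
        rowsum_nonpos hβ1 hβ2 hNy hj1 hj2
      set A := 1 - lCoef γ 1 + σ' i j k' * gCoef α Nx i i + σ'' i j k' * gCoef β Ny j j with hAd
      set Sh := ∑ s ∈ Finset.Icc 1 (k'-1), (lCoef γ s - lCoef γ (s+1)) * ε (k'-s) i j with hShd
      set Sx := ∑ m ∈ (Finset.range (Nx+1)).erase i, gCoef α Nx i m * ε k' m j with hSxd
      set Sy := ∑ m ∈ (Finset.range (Ny+1)).erase j, gCoef β Ny j m * ε k' i m with hSyd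
      have habs : |A * ε k' i j + Sh + σ' i j k' * Sx + σ'' i j k' * Sy + R (k'+1) i j|
          ≤ |A * ε k' i j| + |Sh| + |σ' i j k' * Sx| + |σ'' i j k' * Sy| + |R (k'+1) i j| := by
        calc _ ≤ |A * ε k' i j + Sh + σ' i j k' * Sx + σ'' i j k' * Sy| + |R (k'+1) i j| :=
              abs_add_le _ _
          _ ≤ |A * ε k' i j + Sh + σ' i j k' * Sx| + |σ'' i j k' * Sy| + |R (k'+1) i j| := by
              linarith [abs_add_le (A * ε k' i j + Sh + σ' i j k' * Sx) (σ'' i j k' * Sy)]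
          _ ≤ |A * ε k' i j + Sh| + |σ' i j k' * Sx| + |σ'' i j k' * Sy| + |R (k'+1) i j| := by
              linarith [abs_add_le (A * ε k' i j + Sh) (σ' i j k' * Sx)]
          _ ≤ _ := by linarith [abs_add_le (A * ε k' i j) Sh]
      have hAbound : |A * ε k' i j| ≤ A * M := by
        rw [abs_mul, abs_of_nonneg hAnn]
        exact mul_le_mul_of_nonneg_left hεk hAnn
      have hSxb : |σ' i j k' * Sx| ≤ σ' i j k'
          * (((∑ m ∈ Finset.Icc 1 (Nx-1), gCoef α Nx i m) - gCoef α Nx i i) * M) := by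
        rw [abs_mul, abs_of_nonneg hσ1]
        exact mul_le_mul_of_nonneg_left hSx hσ1
      have hSyb : |σ'' i j k' * Sy| ≤ σ'' i j k'
          * (((∑ m ∈ Finset.Icc 1 (Ny-1), gCoef β Ny j m) - gCoef β Ny j j) * M) := by
        rw [abs_mul, abs_of_nonneg hσ2]
        exact mul_le_mul_of_nonneg_left hSy hσ2
      have hfinal : A * M + (lCoef γ 1 - lCoef γ k') * M
          + σ' i j k' * (((∑ m ∈ Finset.Icc 1 (Nx-1), gCoef α Nx i m) - gCoef α Nx i i) * M)
          + σ'' i j k' * (((∑ m ∈ Finset.Icc 1 (Ny-1), gCoef β Ny j m) - gCoef β Ny j j) * M)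
          + Rmax ≤ M := by
        have hx0 : σ' i j k' * ((∑ m ∈ Finset.Icc 1 (Nx-1), gCoef α Nx i m) * M) ≤ 0 :=
          mul_nonpos_of_nonneg_of_nonpos hσ1 (mul_nonpos_of_nonpos_of_nonneg hGx hM0)
        have hy0 : σ'' i j k' * ((∑ m ∈ Finset.Icc 1 (Ny-1), gCoef β Ny j m) * M) ≤ 0 :=
          mul_nonpos_of_nonneg_of_nonpos hσ2 (mul_nonpos_of_nonpos_of_nonneg hGy hM0)
        have hident : (1 - lCoef γ k') * M + Rmax = M := by
          rw [hM]
          field_simp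
          ring
        nlinarith [hx0, hy0, hident]
      calc |A * ε k' i j + Sh + σ' i j k' * Sx + σ'' i j k' * Sy + R (k'+1) i j|
          ≤ |A * ε k' i j| + |Sh| + |σ' i j k' * Sx| + |σ'' i j k' * Sy| + |R (k'+1) i j| := habs
        _ ≤ A * M + (lCoef γ 1 - lCoef γ k') * M
            + σ' i j k' * (((∑ m ∈ Finset.Icc 1 (Nx-1), gCoef α Nx i m) - gCoef α Nx i i) * M)
            + σ'' i j k' * (((∑ m ∈ Finset.Icc 1 (Ny-1), gCoef β Ny j m) - gCoef β Ny j j) * M)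
            + Rmax := by
            gcongr <;> first | exact hAbound | exact hhist | exact hSxb | exact hSyb | exact hRk
        _ ≤ M := hfinal
  -- conclusions
  constructor
  · intro k hk1 hkNt
    refine ⟨key k hk1 hkNt, ?_⟩
    have hlpos := lCoef_pos hγ0 hγ1 (k-1)
    have hll := lCoef_lower hγ0 hγ1 hk1
    have hkpos : (0:ℝ) < (k:ℝ) := by exact_mod_cast hk1
    have hkγ : (0:ℝ) < (k:ℝ)^γ := Real.rpow_pos_of_pos hkpos γ
    rw [show (k:ℝ)^γ/(1-γ)*Rmax = ((k:ℝ)^γ*Rmax)/(1-γ) by ring,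
      div_le_div_iff₀ hlpos (by linarith : (0:ℝ) < 1-γ)]
    nlinarith [mul_nonneg hRmax0 (sub_nonneg.mpr hll)]
  · intro T C hT hNtT hC hRC k hkNt
    have hXpos : (0:ℝ) < τ^(2-γ) + Δx^2 + Δy^2 := by positivity
    have hTγ : (0:ℝ) < T^γ := Real.rpow_pos_of_pos hT γ
    rcases Nat.eq_zero_or_pos k with rfl | hk1
    · have : maxAbs2 Nx Ny (ε 0) ≤ 0 := by
        apply maxAbs2_le
        intro i j hi hj
        rw [hinit i j hi hj, abs_zero]
      refine le_trans this ?_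
      have h1γ : (0:ℝ) < 1-γ := by linarith
      positivity
    · have h1 := key k hk1 hkNt
      have hlpos := lCoef_pos hγ0 hγ1 (k-1)
      have hll := lCoef_lower hγ0 hγ1 hk1
      have hkpos : (0:ℝ) < (k:ℝ) := by exact_mod_cast hk1
      have hkγ : (0:ℝ) < (k:ℝ)^γ := Real.rpow_pos_of_pos hkpos γ
      -- Rmax ≤ C τ^γ X
      have hRmaxb : Rmax ≤ C * τ^γ * (τ^(2-γ) + Δx^2 + Δy^2) := by
        obtain ⟨i, j, k0, h1', h2', h3', h4', h5', h6', hEq⟩ := hRmax.1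
        rw [hEq]
        exact hRC i j k0 h1' h2' h3' h4' h5' h6'
      -- (k τ)^γ ≤ T^γ
      have hkτ : (k:ℝ)^γ * τ^γ ≤ T^γ := by
        rw [← Real.mul_rpow (le_of_lt hkpos) hτ.le]
        apply Real.rpow_le_rpow (by positivity) _ hγ0.le
        calc (k:ℝ) * τ ≤ (Nt:ℝ) * τ := by
              apply mul_le_mul_of_nonneg_right _ hτ.le
              exact_mod_cast hkNt
          _ ≤ T := hNtT
      calc maxAbs2 Nx Ny (ε k) ≤ Rmax / lCoef γ (k-1) := h1
        _ ≤ (k:ℝ)^γ / (1-γ) * Rmax := by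
            rw [show (k:ℝ)^γ/(1-γ)*Rmax = ((k:ℝ)^γ*Rmax)/(1-γ) by ring,
              div_le_div_iff₀ hlpos (by linarith : (0:ℝ) < 1-γ)]
            nlinarith [mul_nonneg hRmax0 (sub_nonneg.mpr hll)]
        _ ≤ (k:ℝ)^γ / (1-γ) * (C * τ^γ * (τ^(2-γ) + Δx^2 + Δy^2)) := by
            exact mul_le_mul_of_nonneg_left hRmaxb
              (div_nonneg hkγ.le (by linarith : (0:ℝ) ≤ 1-γ))
        _ = C / (1-γ) * (((k:ℝ)^γ * τ^γ) * (τ^(2-γ) + Δx^2 + Δy^2)) := by ring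
        _ ≤ C / (1-γ) * (T^γ * (τ^(2-γ) + Δx^2 + Δy^2)) := by
            apply mul_le_mul_of_nonneg_left _ (div_nonneg hC.le (by linarith : (0:ℝ) ≤ 1-γ))
            exact mul_le_mul_of_nonneg_right hkτ hXpos.le
        _ = C * T^γ / (1-γ) * (τ^(2-γ) + Δx^2 + Δy^2) := by ring
end
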